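/- arXiv:2510.01791 — 5 statements merged into one kernel-verified Lean document; each statement's English description precedes it below -/
import Mathlib

section
/- Let G be a finite simple graph on at least k+2 vertices with 2|E(G)| < k|V(G)|. Then there exists a set X of vertices such that G - X is disconnected and the subgraph induced by X has chromatic number at most k-1. -/
/-!
By the handshake lemma some vertex `v` has degree less than `k`. Removing its neighbourhood
`X = N(v)` isolates `v`, and since `|V| ≥ k + 2 > |N(v)| + 1` some other vertex survives, so
`G - X` is disconnected; trivially `χ(G[X]) ≤ |X| = deg v ≤ k - 1`.
-/

namespace SimpleGraph

variable {V : Type*} [Fintype V] (G : SimpleGraph V) [DecidableRel G.Adj]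

theorem exists_degree_lt_of_two_mul_card_edgeFinset_lt {k : ℕ}
    (hE : 2 * G.edgeFinset.card < k * Fintype.card V) : ∃ v, G.degree v < k := by
  by_contra! h
  have : k * Fintype.card V ≤ ∑ v, G.degree v := by
    simpa [mul_comm] using Finset.sum_le_sum fun v (_ : v ∈ Finset.univ) => h v
  rw [sum_degrees_eq_twice_card_edges] at this
  omega

theorem not_preconnected_induce_compl_neighborSet {v : V}
    (hv : G.degree v + 2 ≤ Fintype.card V) : ¬ (G.induce (G.neighborSet v)ᶜ).Preconnected := by
  have hcard : 1 < Fintype.card ↥(G.neighborSet v)ᶜ := by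
    rw [Fintype.card_compl_set, card_neighborSet_eq_degree]
    omega
  have := Fintype.one_lt_card_iff_nontrivial.mp hcard
  have hisolated : (G.induce (G.neighborSet v)ᶜ).IsIsolated ⟨v, G.notMem_neighborSet_self⟩ :=
    fun w hw => w.2 hw
  exact fun h => h.not_isIsolated _ hisolated

theorem chromaticNumber_induce_neighborSet_le (v : V) :
    (G.induce (G.neighborSet v)).chromaticNumber ≤ G.degree v := by
  convert (G.induce (G.neighborSet v)).chromaticNumber_le_card
  exact (G.card_neighborSet_eq_degree v).symm

end SimpleGraph

theorem stmt_1_general {V : Type*} [Fintype V] (G : SimpleGraph V) [DecidableRel G.Adj]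
    (k : ℕ) (hcard : k + 2 ≤ Fintype.card V)
    (hE : 2 * G.edgeFinset.card < k * Fintype.card V) :
    ∃ X : Set V, ¬ (G.induce Xᶜ).Preconnected ∧
      (G.induce X).chromaticNumber ≤ (k - 1 : ℕ) := by
  obtain ⟨v, hv⟩ := G.exists_degree_lt_of_two_mul_card_edgeFinset_lt hE
  refine ⟨G.neighborSet v, G.not_preconnected_induce_compl_neighborSet (by omega), ?_⟩
  exact (G.chromaticNumber_induce_neighborSet_le v).trans (by exact_mod_cast (by omega))

/-- Every finite simple graph on at least `k+2` vertices with `2|E(G)| < k|V(G)|` admits a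
cut `X` such that `G - X` is disconnected and `χ(G[X]) ≤ k-1`. -/
theorem stmt_1 {V : Type*} [Fintype V] (G : SimpleGraph V) [DecidableRel G.Adj]
    (k : ℕ) (hk : 0 < k) (hcard : k + 2 ≤ Fintype.card V)
    (hE : 2 * G.edgeFinset.card < k * Fintype.card V) :
    ∃ X : Set V, ¬ (G.induce Xᶜ).Preconnected ∧
      (G.induce X).chromaticNumber ≤ (k - 1 : ℕ) :=
  stmt_1_general G k hcard hE
end

section
/- Let α, β, Δ, s be positive integers with β ≥ 2, and let H = (A ∪ B, E) be an α × α bipartite graph with no bi-hole of size at least s. Construct the graph G on β pairwise disjoint vertex sets A_1, ..., A_β, each of size α, such that each G[A_i] is a complete graph and for each i ∈ {1, ..., β-1} the bipartite graph between A_i and A_{i+1} is isomorphic to H (with A_i playing the role of A and A_{i+1} the role of B), and no other edges. Then for every set X ⊆ V(G) such that G - X is disconnected, there exists an index i such that max{|A_i ∩ X|, |A_{i+1} ∩ X|} ≥ α - s; in particular G[X] contains a clique of size at least α - s. -/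
/-- The chained-clique construction.  `G` lives on `Fin β × Fin α`: the `i`-th part
`A_i = {i} × Fin α` induces a clique, and consecutive parts are connected by a copy of a
fixed bipartite graph `H : Fin α → Fin α → Prop` (A-side first).  If `H` has no bi-hole of
size `≥ s`, then for every separator `X` of `G` some pair of consecutive parts satisfies
`max {|A_i ∩ X|, |A_{i+1} ∩ X|} ≥ α - s`; in particular `G[X]` contains a clique of size
at least `α - s`. -/
theorem stmt_11 (α β Δ s : ℕ) (hα : 0 < α) (hβ : 2 ≤ β) (hΔ : 0 < Δ) (hs : 0 < s)
    (H : Fin α → Fin α → Prop)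
    (hH : ∀ A' B' : Finset (Fin α), (∀ a ∈ A', ∀ b ∈ B', ¬ H a b) →
      min A'.card B'.card < s)
    (G : SimpleGraph (Fin β × Fin α))
    (hG : ∀ u v : Fin β × Fin α, G.Adj u v ↔
      (u.1 = v.1 ∧ u.2 ≠ v.2) ∨
      (u.1.val + 1 = v.1.val ∧ H u.2 v.2) ∨
      (v.1.val + 1 = u.1.val ∧ H v.2 u.2)) :
    ∀ X : Finset (Fin β × Fin α), ¬ (G.induce (↑X : Set (Fin β × Fin α))ᶜ).Preconnected →
      (∃ i : Fin β, i.val + 1 < β ∧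
        α - s ≤ max (X.filter (fun u => u.1 = i)).card
          (X.filter (fun u => u.1.val = i.val + 1)).card) ∧
      ∃ S : Finset (Fin β × Fin α), S ⊆ X ∧ α - s ≤ S.card ∧
        ∀ u ∈ S, ∀ v ∈ S, u ≠ v → G.Adj u v := by
  intro X hX
  classical
  -- clique inside a single part
  have mkS : ∀ j : Fin β, ∀ u ∈ X.filter (fun u => u.1 = j),
      ∀ v ∈ X.filter (fun u => u.1 = j), u ≠ v → G.Adj u v := by
    intro j u hu v hv huv
    rw [Finset.mem_filter] at hu hv
    rw [hG]
    left
    refine ⟨hu.2.trans hv.2.symm, fun h2 => huv ?_⟩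
    exact Prod.ext (hu.2.trans hv.2.symm) h2
  by_cases hαs : α ≤ s
  · have h0 : α - s = 0 := by omega
    exact ⟨⟨⟨0, by omega⟩, by show 0 + 1 < β; omega, by rw [h0]; exact Nat.zero_le _⟩,
      ∅, by simp, by rw [h0]; exact Nat.zero_le _, by simp⟩
  push_neg at hαs
  have hmap : ∀ k : Fin β, X.filter (fun u => u.1 = k)
      = (Finset.univ.filter (fun a : Fin α => ((k, a) : Fin β × Fin α) ∈ X)).map
        ⟨fun a : Fin α => ((k, a) : Fin β × Fin α), by intro a b hab; simpa using hab⟩ := by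
    intro k
    ext u
    simp only [Finset.mem_filter, Finset.mem_map, Finset.mem_univ, true_and,
      Function.Embedding.coeFn_mk]
    constructor
    · rintro ⟨h1, h2⟩
      have he : ((k, u.2) : Fin β × Fin α) = u := Prod.ext h2.symm rfl
      exact ⟨u.2, by rw [he]; exact h1, he⟩
    · rintro ⟨a, haX, rfl⟩
      exact ⟨haX, rfl⟩
  have hle : ∀ k : Fin β, (X.filter (fun u => u.1 = k)).card ≤ α := by
    intro k
    rw [hmap k, Finset.card_map]
    calc (Finset.univ.filter (fun a : Fin α => ((k, a) : Fin β × Fin α) ∈ X)).card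
        ≤ (Finset.univ : Finset (Fin α)).card := Finset.card_filter_le _ _
      _ = α := by simp
  by_cases hA : ∃ i : Fin β, ∀ a : Fin α, (i, a) ∈ X
  · obtain ⟨i, hi⟩ := hA
    have hcard : α ≤ (X.filter (fun u => u.1 = i)).card := by
      have hsub : Finset.univ.map
          ⟨fun a : Fin α => ((i, a) : Fin β × Fin α),
            by intro a b h; simpa using h⟩ ⊆ X.filter (fun u => u.1 = i) := by
        intro u hu
        simp only [Finset.mem_map, Finset.mem_univ, Function.Embedding.coeFn_mk,
          true_and] at hu
        obtain ⟨a, rfl⟩ := hu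
        simp [hi a]
        exact ⟨hi a, rfl⟩
      simpa using Finset.card_le_card hsub
    refine ⟨?_, X.filter (fun u => u.1 = i), Finset.filter_subset _ _, by omega, mkS i⟩
    by_cases h1 : i.val + 1 < β
    · exact ⟨i, h1, le_max_of_le_left (by omega)⟩
    · have hi1 : 1 ≤ i.val := by have := i.isLt; omega
      have hilt := i.isLt
      refine ⟨⟨i.val - 1, by omega⟩, by show i.val - 1 + 1 < β; omega,
        le_max_of_le_right ?_⟩
      have hfe : X.filter (fun u => u.1.val = i.val - 1 + 1)
          = X.filter (fun u => u.1 = i) := by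
        refine Finset.filter_congr ?_
        intro u _
        constructor
        · intro h; exact Fin.ext (by omega)
        · intro h; rw [h]; omega
      show α - s ≤ (X.filter (fun u => u.1.val = i.val - 1 + 1)).card
      rw [hfe]; omega
  · push_neg at hA
    choose w hw using hA
    by_cases hE : ∀ i : Fin β, ∀ h : i.val + 1 < β, ∃ a b : Fin α,
        ((i, a) : Fin β × Fin α) ∉ X ∧ (((⟨i.val + 1, h⟩ : Fin β), b) : Fin β × Fin α) ∉ X
          ∧ H a b
    · -- contradiction: G - X is preconnected
      exfalso
      apply hX
      set S : Set (Fin β × Fin α) := (↑X : Set (Fin β × Fin α))ᶜ with hS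
      have hmem : ∀ v : Fin β × Fin α, v ∉ X → v ∈ S := by
        intro v hv; simp [hS, hv]
      have same_part : ∀ u v : S, (u : Fin β × Fin α).1 = (v : Fin β × Fin α).1 →
          (G.induce S).Reachable u v := by
        intro u v h
        by_cases he : u = v
        · rw [he]
        · apply SimpleGraph.Adj.reachable
          show G.Adj (u : Fin β × Fin α) (v : Fin β × Fin α)
          rw [hG]
          left
          refine ⟨h, fun h2 => he ?_⟩
          exact Subtype.ext (Prod.ext h h2)
      set pt : Fin β → S := fun j => ⟨(j, w j), hmem _ (hw j)⟩ with hpt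
      have step : ∀ (n : ℕ) (h : n + 1 < β),
          (G.induce S).Reachable (pt ⟨n, by omega⟩) (pt ⟨n + 1, h⟩) := by
        intro n h
        obtain ⟨a, b, ha, hb, hab⟩ := hE ⟨n, by omega⟩ h
        have r1 := same_part (pt ⟨n, by omega⟩)
          ⟨((⟨n, by omega⟩ : Fin β), a), hmem _ ha⟩ rfl
        have r2 : (G.induce S).Adj ⟨((⟨n, by omega⟩ : Fin β), a), hmem _ ha⟩
            ⟨((⟨n + 1, h⟩ : Fin β), b), hmem _ hb⟩ := by
          show G.Adj _ _
          rw [hG]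
          right; left
          exact ⟨rfl, hab⟩
        have r3 := same_part ⟨((⟨n + 1, h⟩ : Fin β), b), hmem _ hb⟩ (pt ⟨n + 1, h⟩) rfl
        exact r1.trans (r2.reachable.trans r3)
      have reach0 : ∀ (n : ℕ) (h : n < β),
          (G.induce S).Reachable (pt ⟨0, by omega⟩) (pt ⟨n, h⟩) := by
        intro n
        induction n with
        | zero => intro h; exact SimpleGraph.Reachable.refl _
        | succ k ih => intro h; exact (ih (by omega)).trans (step k h)
      have reachpt : ∀ j : Fin β, (G.induce S).Reachable (pt ⟨0, by omega⟩) (pt j) := by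
        intro j
        obtain ⟨n, hn⟩ := j
        exact reach0 n hn
      intro u v
      refine (same_part u (pt (u : Fin β × Fin α).1) rfl).trans ?_
      refine SimpleGraph.Reachable.trans ?_ (same_part (pt (v : Fin β × Fin α).1) v rfl)
      exact (reachpt _).symm.trans (reachpt _)
    · push_neg at hE
      obtain ⟨i, h, hno⟩ := hE
      set j : Fin β := ⟨i.val + 1, h⟩ with hj
      -- counting lemma
      have key : ∀ k : Fin β,
          (Finset.univ.filter (fun a : Fin α => ((k, a) : Fin β × Fin α) ∉ X)).card
            = α - (X.filter (fun u => u.1 = k)).card := by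
        intro k
        have h1 : (X.filter (fun u => u.1 = k)).card
            = (Finset.univ.filter (fun a : Fin α => ((k, a) : Fin β × Fin α) ∈ X)).card := by
          rw [hmap k, Finset.card_map]
        have h2 := Finset.card_filter_add_card_filter_not
          (s := (Finset.univ : Finset (Fin α)))
          (p := fun a => ((k, a) : Fin β × Fin α) ∈ X)
        simp only [Finset.card_univ, Fintype.card_fin] at h2
        omega
      have hAB := hH (Finset.univ.filter (fun a : Fin α => ((i, a) : Fin β × Fin α) ∉ X))
        (Finset.univ.filter (fun b : Fin α => ((j, b) : Fin β × Fin α) ∉ X))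
        (by
          intro a ha b hb
          rw [Finset.mem_filter] at ha hb
          exact hno a b ha.2 hb.2)
      rw [key i, key j] at hAB
      have hfi := hle i
      have hfj := hle j
      have hfe : X.filter (fun u => u.1.val = i.val + 1) = X.filter (fun u => u.1 = j) := by
        apply Finset.filter_congr
        intro u _
        constructor
        · intro hh; exact Fin.ext hh
        · intro hh; rw [hh]
      have hmax : α - s ≤ max (X.filter (fun u => u.1 = i)).card
          (X.filter (fun u => u.1 = j)).card := by
        rcases min_cases (α - (X.filter (fun u => u.1 = i)).card)
            (α - (X.filter (fun u => u.1 = j)).card) with ⟨hm, _⟩ | ⟨hm, _⟩ <;>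
          rw [hm] at hAB
        · exact le_max_of_le_left (by omega)
        · exact le_max_of_le_right (by omega)
      refine ⟨⟨i, h, by rw [hfe]; exact hmax⟩, ?_⟩
      rcases max_cases (X.filter (fun u => u.1 = i)).card
          (X.filter (fun u => u.1 = j)).card with ⟨hm, _⟩ | ⟨hm, _⟩ <;> rw [hm] at hmax
      · exact ⟨X.filter (fun u => u.1 = i), Finset.filter_subset _ _, hmax, mkS i⟩
      · exact ⟨X.filter (fun u => u.1 = j), Finset.filter_subset _ _, hmax, mkS j⟩
end

section
/- Let G be a graph with the minimum number of vertices among all graphs satisfying ℓ|V(G)| - |E(G)| > c and admitting no set X with G - X disconnected and χ(G[X]) < k. Then every subset X ⊆ V(G) that is not a clique satisfies ℓ|X| - |E(G[X])| > ℓt - t(t-1)/2, where t = χ(G[X]). -/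
set_option linter.unusedSectionVars false
set_option maxHeartbeats 1000000

open Function Set

namespace Stmt14Aux

variable {V : Type} [Fintype V] [DecidableEq V]

lemma ncard_edgeSet_eq {W : Type*} (G : SimpleGraph W) [Fintype G.edgeSet] :
    G.edgeSet.ncard = G.edgeFinset.card := Set.ncard_eq_toFinset_card' _

lemma chrom_le_of_hom {V' W' : Type*} {A : SimpleGraph V'} {B : SimpleGraph W'} (f : A →g B) :
    A.chromaticNumber ≤ B.chromaticNumber :=
  SimpleGraph.chromaticNumber_le_of_forall_imp fun _ h => h.elim fun C => ⟨C.comp f⟩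

lemma coloring_surj {V' : Type*} {A : SimpleGraph V'} {t : ℕ}
    (h : A.chromaticNumber = t) (C : A.Coloring (Fin t)) : Surjective C := by
  intro i
  by_contra hi
  push_neg at hi
  classical
  have C' : A.Coloring {j : Fin t // j ≠ i} :=
    SimpleGraph.Coloring.mk (fun v => ⟨C v, hi v⟩)
      (fun hadj => by simpa [Subtype.ext_iff] using C.valid hadj)
  have hcol := C'.colorable
  have hlt : Fintype.card {j : Fin t // j ≠ i} < t := by
    have := Fintype.card_subtype_lt (p := fun j : Fin t => j ≠ i) (x := i) (by simp)
    simpa using this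
  have hle : A.chromaticNumber ≤ (Fintype.card {j : Fin t // j ≠ i} : ℕ∞) :=
    SimpleGraph.chromaticNumber_le_iff_colorable.mpr hcol
  rw [h, Nat.cast_le] at hle
  omega

variable (G : SimpleGraph V) (X : Finset V) {t : ℕ}
  (C : (G.induce (↑X : Set V)).Coloring (Fin t))

/-- The auxiliary vertex type: vertices outside `X`, plus `t` new vertices. -/
def AuxW (X : Finset V) (t : ℕ) : Type := {v : V // v ∉ X} ⊕ Fin t

instance : Fintype (AuxW X t) := inferInstanceAs (Fintype ({v : V // v ∉ X} ⊕ Fin t))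

lemma card_auxW : Fintype.card (AuxW X t) = (Fintype.card V - X.card) + t := by
  have h1 : Fintype.card {v : V // v ∈ X} = X.card := Fintype.card_coe X
  have := Fintype.card_subtype_compl (fun v : V => v ∈ X)
  exact (Fintype.card_sum (α := {v : V // v ∉ X}) (β := Fin t)).trans
    (by rw [Fintype.card_fin, this, h1])

def auxAdj : AuxW X t → AuxW X t → Prop
  | Sum.inl u, Sum.inl v => G.Adj u.1 v.1
  | Sum.inl u, Sum.inr i => ∃ (x : V) (hx : x ∈ X), G.Adj u.1 x ∧ C ⟨x, hx⟩ = i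
  | Sum.inr i, Sum.inl u => ∃ (x : V) (hx : x ∈ X), G.Adj u.1 x ∧ C ⟨x, hx⟩ = i
  | Sum.inr i, Sum.inr j => i ≠ j

/-- The auxiliary graph: contract `X` to a copy of `K_t` along the colouring `C`. -/
def auxG : SimpleGraph (AuxW X t) where
  Adj := auxAdj G X C
  symm := by
    constructor
    rintro (u | i) (v | j) h
    · exact h.symm
    · exact h
    · exact h
    · exact Ne.symm h
  loopless := by
    constructor
    rintro (u | i) h
    · exact G.irrefl h
    · exact h rfl

/-- The projection map. -/
def auxPhi : V → AuxW X t := fun v =>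
  if h : v ∈ X then Sum.inr (C ⟨v, h⟩) else Sum.inl ⟨v, h⟩

lemma auxPhi_mem {v : V} (h : v ∈ X) : auxPhi G X C v = Sum.inr (C ⟨v, h⟩) := dif_pos h

lemma auxPhi_not_mem {v : V} (h : v ∉ X) : auxPhi G X C v = Sum.inl ⟨v, h⟩ := dif_neg h

lemma auxPhi_not_mem' (u : {v : V // v ∉ X}) : auxPhi G X C u.1 = Sum.inl u := dif_neg u.2

lemma auxPhi_adj {a b : V} (hab : G.Adj a b) :
    (auxG G X C).Adj (auxPhi G X C a) (auxPhi G X C b) := by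
  by_cases ha : a ∈ X <;> by_cases hb : b ∈ X
  · rw [auxPhi_mem G X C ha, auxPhi_mem G X C hb]
    exact C.valid hab
  · rw [auxPhi_mem G X C ha, auxPhi_not_mem G X C hb]
    exact ⟨a, ha, hab.symm, rfl⟩
  · rw [auxPhi_not_mem G X C ha, auxPhi_mem G X C hb]
    exact ⟨b, hb, hab, rfl⟩
  · rw [auxPhi_not_mem G X C ha, auxPhi_not_mem G X C hb]
    exact hab

/-- The projection as a graph homomorphism. -/
def auxHom : G →g auxG G X C where
  toFun := auxPhi G X C
  map_rel' := auxPhi_adj G X C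

lemma auxPhi_surjective (hs : Surjective C) : Surjective (auxPhi G X C) := by
  rintro (u | i)
  · exact ⟨u.1, auxPhi_not_mem G X C u.2⟩
  · obtain ⟨⟨x, hx⟩, hCx⟩ := hs i
    exact ⟨x, by rw [auxPhi_mem G X C hx]; exact congrArg _ hCx⟩

lemma aux_chrom (Y : Set (AuxW X t)) :
    (G.induce (auxPhi G X C ⁻¹' Y)).chromaticNumber ≤
      ((auxG G X C).induce Y).chromaticNumber :=
  chrom_le_of_hom (SimpleGraph.induceHom (auxHom G X C) (fun _ hv => hv))

lemma aux_cut (hs : Surjective C) (Y : Set (AuxW X t))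
    (h : ¬ ((auxG G X C).induce Yᶜ).Preconnected) :
    ¬ (G.induce (auxPhi G X C ⁻¹' Y)ᶜ).Preconnected := by
  intro hpre
  apply h
  intro a b
  obtain ⟨va, hva⟩ := auxPhi_surjective G X C hs a.1
  obtain ⟨vb, hvb⟩ := auxPhi_surjective G X C hs b.1
  have hma : va ∈ (auxPhi G X C ⁻¹' Y)ᶜ := by
    simp only [Set.mem_compl_iff, Set.mem_preimage, hva]
    exact a.2
  have hmb : vb ∈ (auxPhi G X C ⁻¹' Y)ᶜ := by
    simp only [Set.mem_compl_iff, Set.mem_preimage, hvb]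
    exact b.2
  have hmaps : Set.MapsTo (auxHom G X C) ((auxPhi G X C ⁻¹' Y)ᶜ) Yᶜ := fun v hv => hv
  have hreach := (hpre ⟨va, hma⟩ ⟨vb, hmb⟩).map (SimpleGraph.induceHom (auxHom G X C) hmaps)
  have ea : (SimpleGraph.induceHom (auxHom G X C) hmaps) ⟨va, hma⟩ = a := Subtype.ext hva
  have eb : (SimpleGraph.induceHom (auxHom G X C) hmaps) ⟨vb, hmb⟩ = b := Subtype.ext hvb
  rwa [ea, eb] at hreach

lemma aux_edge :
    (auxG G X C).edgeSet.ncard + (G.induce (↑X : Set V)).edgeSet.ncard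
      ≤ G.edgeSet.ncard + t.choose 2 := by
  classical
  set D : Set (Sym2 V) := {e | e ∈ G.edgeSet ∧ ∀ v ∈ e, v ∈ X} with hD
  have hDsub : D ⊆ G.edgeSet := fun e he => he.1
  have hDcard : D.ncard = (G.induce (↑X : Set V)).edgeSet.ncard := by
    rw [← Set.ncard_image_of_injective (G.induce (↑X : Set V)).edgeSet
        (Sym2.map.injective Subtype.coe_injective)]
    congr 1
    apply Set.Subset.antisymm
    · intro e he
      induction e using Sym2.ind with
      | _ a b =>
        obtain ⟨hadj, hmem⟩ := he
        have ha : a ∈ X := hmem a (Sym2.mem_mk_left a b)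
        have hb : b ∈ X := hmem b (Sym2.mem_mk_right a b)
        exact ⟨s(⟨a, ha⟩, ⟨b, hb⟩), hadj, Sym2.map_pair_eq _ _ _⟩
    · rintro e ⟨e', he', rfl⟩
      induction e' using Sym2.ind with
      | _ a b =>
        rw [Sym2.map_pair_eq]
        refine ⟨he', ?_⟩
        intro v hv
        rcases Sym2.mem_iff.mp hv with rfl | rfl
        · exact a.2
        · exact b.2
  have hwit : ∀ (u : V) (i : Fin t), ∃ x : V,
      (∃ (y : V) (hy : y ∈ X), G.Adj u y ∧ C ⟨y, hy⟩ = i) →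
      ∃ hx : x ∈ X, G.Adj u x ∧ C ⟨x, hx⟩ = i := by
    intro u i
    by_cases h : ∃ (y : V) (hy : y ∈ X), G.Adj u y ∧ C ⟨y, hy⟩ = i
    · obtain ⟨y, hy, h1, h2⟩ := h
      exact ⟨y, fun _ => ⟨hy, h1, h2⟩⟩
    · exact ⟨u, fun hc => absurd hc h⟩
  choose wit hwitspec using hwit
  let F2 : AuxW X t → AuxW X t → Sym2 V ⊕ Sym2 (Fin t) := fun a b =>
    match a, b with
    | Sum.inl u, Sum.inl v => Sum.inl s(u.1, v.1)
    | Sum.inl u, Sum.inr i => Sum.inl s(u.1, wit u.1 i)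
    | Sum.inr i, Sum.inl u => Sum.inl s(u.1, wit u.1 i)
    | Sum.inr i, Sum.inr j => Sum.inr s(i, j)
  have hF2symm : ∀ a b, F2 a b = F2 b a := by
    rintro (u | i) (v | j) <;> simp only [F2] <;> rw [Sym2.eq_swap]
  let R : Sym2 V ⊕ Sym2 (Fin t) → Sym2 (AuxW X t) :=
    Sum.elim (Sym2.map (auxPhi G X C)) (Sym2.map Sum.inr)
  have hRF : ∀ a b : AuxW X t, (auxG G X C).Adj a b → R (F2 a b) = s(a, b) := by
    rintro (u | i) (v | j) h
    · show Sym2.map (auxPhi G X C) s(u.1, v.1) = s(Sum.inl u, Sum.inl v)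
      rw [Sym2.map_pair_eq, auxPhi_not_mem' G X C u, auxPhi_not_mem' G X C v]
      rfl
    · obtain ⟨hx, hadj, hC⟩ := hwitspec u.1 j h
      show Sym2.map (auxPhi G X C) s(u.1, wit u.1 j) = s(Sum.inl u, Sum.inr j)
      rw [Sym2.map_pair_eq, auxPhi_not_mem' G X C u, auxPhi_mem G X C hx, hC]
      rfl
    · obtain ⟨hx, hadj, hC⟩ := hwitspec v.1 i h
      show Sym2.map (auxPhi G X C) s(v.1, wit v.1 i) = s(Sum.inr i, Sum.inl v)
      rw [Sym2.map_pair_eq, auxPhi_not_mem' G X C v, auxPhi_mem G X C hx, hC, Sym2.eq_swap]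
      rfl
    · show Sym2.map Sum.inr s(i, j) = s(Sum.inr i, Sum.inr j)
      rw [Sym2.map_pair_eq]
  have hFmem : ∀ e ∈ (auxG G X C).edgeSet,
      Sym2.lift ⟨F2, hF2symm⟩ e ∈
        (Sum.inl '' (G.edgeSet \ D) ∪ Sum.inr '' (⊤ : SimpleGraph (Fin t)).edgeSet :
          Set (Sym2 V ⊕ Sym2 (Fin t))) := by
    intro e
    induction e using Sym2.ind with
    | _ a b =>
      intro he
      rw [Sym2.lift_mk]
      rcases a with u | i <;> rcases b with v | j
      · exact Or.inl ⟨s(u.1, v.1), ⟨he, fun hd => u.2 (hd.2 u.1 (Sym2.mem_mk_left _ _))⟩, rfl⟩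
      · obtain ⟨hx, hadj, hC⟩ := hwitspec u.1 j he
        exact Or.inl ⟨s(u.1, wit u.1 j), ⟨hadj, fun hd => u.2 (hd.2 u.1 (Sym2.mem_mk_left _ _))⟩,
          rfl⟩
      · obtain ⟨hx, hadj, hC⟩ := hwitspec v.1 i he
        exact Or.inl ⟨s(v.1, wit v.1 i), ⟨hadj, fun hd => v.2 (hd.2 v.1 (Sym2.mem_mk_left _ _))⟩,
          rfl⟩
      · exact Or.inr ⟨s(i, j), he, rfl⟩
  have hinj : Set.InjOn (Sym2.lift ⟨F2, hF2symm⟩) (auxG G X C).edgeSet := by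
    intro e1 h1 e2 h2 hF
    induction e1 using Sym2.ind with
    | _ a b =>
      induction e2 using Sym2.ind with
      | _ c d =>
        rw [← hRF a b h1, ← hRF c d h2]
        exact congrArg R hF
  have hEle : (auxG G X C).edgeSet.ncard ≤ (G.edgeSet \ D).ncard + t.choose 2 := by
    have h1 := Set.ncard_le_ncard_of_injOn _ hFmem hinj (Set.toFinite _)
    refine h1.trans ((Set.ncard_union_le _ _).trans ?_)
    rw [Set.ncard_image_of_injective _ Sum.inl_injective,
        Set.ncard_image_of_injective _ Sum.inr_injective]
    have h2 : (⊤ : SimpleGraph (Fin t)).edgeSet.ncard = t.choose 2 := by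
      rw [ncard_edgeSet_eq, SimpleGraph.card_edgeFinset_top_eq_card_choose_two, Fintype.card_fin]
    omega
  have hdiff : (G.edgeSet \ D).ncard = G.edgeSet.ncard - D.ncard := Set.ncard_diff hDsub
  have hle2 : D.ncard ≤ G.edgeSet.ncard := Set.ncard_le_ncard hDsub (Set.toFinite _)
  rw [hdiff] at hEle
  omega

end Stmt14Aux

/-- Suppose `G` has the minimum number of vertices among all graphs `G'` satisfying
`ℓ|V(G')| - |E(G')| > c` and admitting no cut `X` with `χ(G'[X]) < k`.  Then every subset
`X` of `V(G)` that is not a clique satisfies `ℓ|X| - |E(G[X])| > ℓt - t(t-1)/2`, where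
`t = χ(G[X])`. -/
theorem stmt_14 (ℓ c : ℝ) (k : ℕ) (hk : 0 < k)
    {V : Type} [Fintype V] (G : SimpleGraph V)
    (hG : ℓ * (Fintype.card V : ℝ) - (G.edgeSet.ncard : ℝ) > c)
    (hcut : ∀ X : Set V, ¬ (G.induce Xᶜ).Preconnected →
      (k : ℕ∞) ≤ (G.induce X).chromaticNumber)
    (hmin : ∀ (W : Type) [Fintype W] (G' : SimpleGraph W),
      (ℓ * (Fintype.card W : ℝ) - (G'.edgeSet.ncard : ℝ) > c) →
      (∀ X : Set W, ¬ (G'.induce Xᶜ).Preconnected →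
        (k : ℕ∞) ≤ (G'.induce X).chromaticNumber) →
      Fintype.card V ≤ Fintype.card W) :
    ∀ (X : Finset V), (¬ ∀ u ∈ X, ∀ v ∈ X, u ≠ v → G.Adj u v) →
      ∀ t : ℕ, (t : ℕ∞) = (G.induce (↑X : Set V)).chromaticNumber →
        ℓ * (X.card : ℝ) - ((G.induce (↑X : Set V)).edgeSet.ncard : ℝ) >
          ℓ * (t : ℝ) - (t : ℝ) * ((t : ℝ) - 1) / 2 := by
  classical
  intro X hXclique t ht
  by_contra hcon
  push_neg at hcon
  push_neg at hXclique
  obtain ⟨u0, hu0, v0, hv0, hne0, hnadj⟩ := hXclique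
  have hcolt : (G.induce (↑X : Set V)).Colorable t :=
    SimpleGraph.chromaticNumber_le_iff_colorable.mp (le_of_eq ht.symm)
  obtain ⟨C⟩ := hcolt
  have hCsurj : Function.Surjective C := Stmt14Aux.coloring_surj ht.symm C
  have hv0' : v0 ∈ (↑X : Set V) := hv0
  have hu0' : u0 ∈ (↑X : Set V) := hu0
  -- `t < X.card` since `X` is not a clique
  have htX : t < X.card := by
    have hune : (⟨u0, hu0'⟩ : (↑X : Set V)) ≠ ⟨v0, hv0'⟩ := by
      simp only [ne_eq, Subtype.mk.injEq]
      exact hne0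
    have C2 : (G.induce (↑X : Set V)).Coloring
        {w : (↑X : Set V) // w ≠ (⟨v0, hv0'⟩ : (↑X : Set V))} :=
      SimpleGraph.Coloring.mk
        (fun w => if h : w = (⟨v0, hv0'⟩ : (↑X : Set V)) then ⟨⟨u0, hu0'⟩, hune⟩ else ⟨w, h⟩)
        (by
          intro a b hab
          have hab' : G.Adj a.1 b.1 := hab
          intro hc
          split_ifs at hc with h1 h2 h2
          · rw [h1, h2] at hab'
            exact G.irrefl hab'
          · apply hnadj
            have hb : (⟨u0, hu0'⟩ : (↑X : Set V)) = b := Subtype.ext_iff.mp hc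
            have h3 := hab'
            rw [h1, ← hb] at h3
            exact h3.symm
          · apply hnadj
            have ha : a = (⟨u0, hu0'⟩ : (↑X : Set V)) := Subtype.ext_iff.mp hc
            have h3 := hab'
            rw [ha, h2] at h3
            exact h3
          · exact hab'.ne (congrArg Subtype.val (Subtype.ext_iff.mp hc)))
    have hcard : Fintype.card {w : (↑X : Set V) // w ≠ (⟨v0, hv0'⟩ : (↑X : Set V))} < X.card := by
      have h1 : Fintype.card {w : (↑X : Set V) // w ≠ (⟨v0, hv0'⟩ : (↑X : Set V))}
          < Fintype.card ((↑X : Set V)) :=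
        Fintype.card_subtype_lt (x := (⟨v0, hv0'⟩ : (↑X : Set V))) (by simp)
      have h2 : Fintype.card ((↑X : Set V)) = X.card := by
        rw [← Set.toFinset_card, Finset.toFinset_coe]
      omega
    have hchrom := SimpleGraph.chromaticNumber_le_iff_colorable.mpr C2.colorable
    rw [← ht, Nat.cast_le] at hchrom
    omega
  -- the contracted graph satisfies the cut condition
  have hcutW : ∀ Y : Set (Stmt14Aux.AuxW X t),
      ¬ ((Stmt14Aux.auxG G X C).induce Yᶜ).Preconnected →
      (k : ℕ∞) ≤ ((Stmt14Aux.auxG G X C).induce Y).chromaticNumber := by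
    intro Y hY
    have h1 := Stmt14Aux.aux_cut G X C hCsurj Y hY
    exact (hcut _ h1).trans (Stmt14Aux.aux_chrom G X C Y)
  have hedge := Stmt14Aux.aux_edge G X C
  have hXle : X.card ≤ Fintype.card V := X.card_le_univ
  have hcardW : Fintype.card (Stmt14Aux.AuxW X t) = (Fintype.card V - X.card) + t :=
    Stmt14Aux.card_auxW (X := X) (t := t)
  -- the contracted graph satisfies the density condition
  have hmain : ℓ * (Fintype.card (Stmt14Aux.AuxW X t) : ℝ)
      - ((Stmt14Aux.auxG G X C).edgeSet.ncard : ℝ) > c := by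
    have hcast : (Fintype.card (Stmt14Aux.AuxW X t) : ℝ)
        = (Fintype.card V : ℝ) - (X.card : ℝ) + (t : ℝ) := by
      rw [hcardW]
      push_cast [Nat.cast_sub hXle]
      ring
    have h3 : ((Stmt14Aux.auxG G X C).edgeSet.ncard : ℝ)
        + ((G.induce (↑X : Set V)).edgeSet.ncard : ℝ)
        ≤ (G.edgeSet.ncard : ℝ) + ((t.choose 2 : ℕ) : ℝ) := by
      exact_mod_cast hedge
    have h4 : ((t.choose 2 : ℕ) : ℝ) = (t : ℝ) * ((t : ℝ) - 1) / 2 := Nat.cast_choose_two (K := ℝ) t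
    rw [hcast]
    rw [h4] at h3
    linarith [hG, hcon, h3]
  have hfin := hmin (Stmt14Aux.AuxW X t) (Stmt14Aux.auxG G X C) hmain hcutW
  rw [hcardW] at hfin
  omega
end

section
/- For all real ε ∈ (0,1], integers Δ ≥ 27 with 1 - 8·(ln Δ)/Δ ≥ 1/(1 + ε/2), and integers k with (ε/2)·k ≥ 2Δ and (1+ε/2)·k ≥ Δ/ln Δ: assuming there exists an α × α bipartite graph H with α = ⌈(1+ε/2)k⌉, maximum degree at most Δ on one side, and no bi-hole of size at least 8·(ln Δ)/Δ·α, then for every integer β ≥ 2 there exists a graph G on αβ vertices with average degree less than (1+ε)k in which every set X with G - X disconnected satisfies χ(G[X]) ≥ k. -/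
namespace Stmt15Aux

variable {α β : ℕ}

def enc (a : Fin α) (j : Fin β) : Fin (α * β) :=
  ⟨a.val + α * j.val, by
    have h1 : a.val + α * j.val < α * (j.val + 1) := by
      rw [Nat.mul_succ]; omega
    exact lt_of_lt_of_le h1 (Nat.mul_le_mul_left α j.isLt)⟩

def posv (v : Fin (α * β)) : Fin α :=
  ⟨v.val % α, by
    have hv := v.isLt
    rcases Nat.eq_zero_or_pos α with h | h
    · subst h; omega
    · exact Nat.mod_lt _ h⟩

def blkv (v : Fin (α * β)) : Fin β :=
  ⟨v.val / α, by
    have hv := v.isLt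
    rcases Nat.eq_zero_or_pos α with h | h
    · subst h; omega
    · exact Nat.div_lt_of_lt_mul hv⟩

@[simp] lemma posv_enc (a : Fin α) (j : Fin β) : posv (enc a j) = a := by
  have : 0 < α := a.pos
  simp [posv, enc, Nat.add_mul_mod_self_left, Nat.mod_eq_of_lt a.isLt]

@[simp] lemma blkv_enc (a : Fin α) (j : Fin β) : blkv (enc a j) = j := by
  have hα : 0 < α := a.pos
  simp [blkv, enc, Nat.add_mul_div_left _ _ hα, Nat.div_eq_of_lt a.isLt]

@[simp] lemma enc_posv_blkv (v : Fin (α * β)) : enc (posv v) (blkv v) = v := by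
  simp [enc, posv, blkv, Nat.mod_add_div, Fin.ext_iff]

lemma vert_ext {v w : Fin (α * β)} (h1 : posv v = posv w) (h2 : blkv v = blkv w) :
    v = w := by
  rw [← enc_posv_blkv v, ← enc_posv_blkv w, h1, h2]

/-- the equivalence `Fin α × Fin β ≃ Fin (α*β)` given by `enc`. -/
def encEquiv : Fin α × Fin β ≃ Fin (α * β) where
  toFun p := enc p.1 p.2
  invFun v := (posv v, blkv v)
  left_inv p := by simp
  right_inv v := by simp

/-- The chained-clique graph. -/
def CG (H : Fin α → Finset (Fin α)) : SimpleGraph (Fin (α * β)) where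
  Adj v w := v ≠ w ∧ (blkv v = blkv w ∨
    ((blkv w).val = (blkv v).val + 1 ∧ posv w ∈ H (posv v)) ∨
    ((blkv v).val = (blkv w).val + 1 ∧ posv v ∈ H (posv w)))
  symm := by
    constructor; rintro v w ⟨h1, h2⟩
    refine ⟨h1.symm, ?_⟩
    rcases h2 with h | h | h
    · exact Or.inl h.symm
    · exact Or.inr (Or.inr h)
    · exact Or.inr (Or.inl h)
  loopless := ⟨fun v h => h.1 rfl⟩

instance (H : Fin α → Finset (Fin α)) : DecidableRel (CG (β := β) H).Adj := fun v w =>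
  inferInstanceAs (Decidable (_ ∧ _))

lemma cg_adj (H : Fin α → Finset (Fin α)) (v w : Fin (α * β)) :
    (CG H).Adj v w ↔ v ≠ w ∧ (blkv v = blkv w ∨
    ((blkv w).val = (blkv v).val + 1 ∧ posv w ∈ H (posv v)) ∨
    ((blkv v).val = (blkv w).val + 1 ∧ posv v ∈ H (posv w))) := Iff.rfl

open Finset in
/-- degree bound -/
lemma cg_degree_le (H : Fin α → Finset (Fin α)) (v : Fin (α * β)) :
    (CG H).degree v ≤ (α - 1) + (H (posv v)).card +
      (univ.filter (fun a' => posv v ∈ H a')).card := by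
  classical
  rw [← SimpleGraph.card_neighborFinset_eq_degree]
  have hsub : (CG H).neighborFinset v ⊆
      (univ.filter (fun w => blkv w = blkv v ∧ w ≠ v)) ∪
      (univ.filter (fun w => (blkv w).val = (blkv v).val + 1 ∧ posv w ∈ H (posv v))) ∪
      (univ.filter (fun w => (blkv v).val = (blkv w).val + 1 ∧ posv v ∈ H (posv w))) := by
    intro w hw
    rw [SimpleGraph.mem_neighborFinset, cg_adj] at hw
    obtain ⟨hne, h⟩ := hw
    simp only [mem_union, mem_filter, mem_univ, true_and]
    rcases h with h | h | h
    · exact Or.inl (Or.inl ⟨h.symm, hne.symm⟩)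
    · exact Or.inl (Or.inr h)
    · exact Or.inr h
  refine le_trans (card_le_card hsub) (le_trans (card_union_le _ _) ?_)
  gcongr
  · refine le_trans (card_union_le _ _) ?_
    gcongr
    · calc (univ.filter (fun w => blkv w = blkv v ∧ w ≠ v)).card
          ≤ (univ.erase (posv v)).card := by
            apply card_le_card_of_injOn posv
            · intro w hw
              simp only [coe_filter, Set.mem_setOf_eq, mem_univ, true_and] at hw
              refine mem_erase.2 ⟨?_, mem_univ _⟩
              intro hp
              exact hw.2 (vert_ext hp hw.1)
            · intro w1 h1 w2 h2 hp
              simp only [coe_filter, Set.mem_setOf_eq, mem_univ, true_and] at h1 h2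
              exact vert_ext hp (h1.1.trans h2.1.symm)
        _ = α - 1 := by rw [card_erase_of_mem (mem_univ _), card_univ, Fintype.card_fin]
    · apply card_le_card_of_injOn posv
      · intro w hw
        simp only [coe_filter, Set.mem_setOf_eq, mem_univ, true_and] at hw
        exact hw.2
      · intro w1 h1 w2 h2 hp
        simp only [coe_filter, Set.mem_setOf_eq, mem_univ, true_and] at h1 h2
        exact vert_ext hp (Fin.ext (by omega))
  · apply card_le_card_of_injOn posv
    · intro w hw
      simp only [coe_filter, Set.mem_setOf_eq, mem_univ, true_and] at hw
      simp only [coe_filter, Set.mem_setOf_eq, mem_univ, true_and]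
      exact hw.2
    · intro w1 h1 w2 h2 hp
      simp only [coe_filter, Set.mem_setOf_eq, mem_univ, true_and] at h1 h2
      exact vert_ext hp (Fin.ext (by omega))

open Finset in
lemma cg_sum_degree_le (H : Fin α → Finset (Fin α)) (Δ : ℕ)
    (hHdeg : ∀ a, (H a).card ≤ Δ) :
    ∑ v : Fin (α * β), (CG H).degree v ≤ α * β * ((α - 1) + 2 * Δ) := by
  classical
  have hrev : ∑ a : Fin α, (univ.filter (fun a' => a ∈ H a')).card ≤ α * Δ := by
    have : ∑ a : Fin α, (univ.filter (fun a' => a ∈ H a')).card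
        = ∑ a' : Fin α, (H a').card := by
      simp only [card_filter]
      rw [Finset.sum_comm]
      congr 1
      funext a'
      rw [← card_filter]
      congr 1
      exact Finset.filter_univ_mem (H a')
    rw [this]
    calc ∑ a' : Fin α, (H a').card ≤ ∑ _a' : Fin α, Δ := by
          exact Finset.sum_le_sum (fun a' _ => hHdeg a')
      _ = α * Δ := by simp [Finset.sum_const, mul_comm]
  calc ∑ v : Fin (α * β), (CG H).degree v
      ≤ ∑ v : Fin (α * β), ((α - 1) + (H (posv v)).card +
          (univ.filter (fun a' => posv v ∈ H a')).card) :=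
        Finset.sum_le_sum (fun v _ => cg_degree_le H v)
    _ ≤ ∑ v : Fin (α * β), ((α - 1) + Δ +
          (univ.filter (fun a' => posv v ∈ H a')).card) := by
        apply Finset.sum_le_sum
        intro v _
        have := hHdeg (posv v)
        omega
    _ = α * β * ((α - 1) + Δ) +
        ∑ v : Fin (α * β), (univ.filter (fun a' => posv v ∈ H a')).card := by
        rw [Finset.sum_add_distrib]
        simp [Finset.sum_const, mul_comm]
    _ ≤ α * β * ((α - 1) + Δ) + α * β * Δ := by
        have : ∑ v : Fin (α * β), (univ.filter (fun a' => posv v ∈ H a')).card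
            = β * ∑ a : Fin α, (univ.filter (fun a' => a ∈ H a')).card := by
          rw [← Equiv.sum_comp (encEquiv (α := α) (β := β))
            (fun v => (univ.filter (fun a' => posv v ∈ H a')).card)]
          simp only [encEquiv, Equiv.coe_fn_mk, posv_enc]
          rw [Fintype.sum_prod_type_right]
          show (∑ _y : Fin β, ∑ x : Fin α, (univ.filter (fun a' => x ∈ H a')).card) = _
          rw [Finset.sum_const, Finset.card_univ, Fintype.card_fin, smul_eq_mul]
        rw [this]
        exact Nat.add_le_add_left
          (le_trans (Nat.mul_le_mul_left β hrev) (le_of_eq (by ring))) _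
    _ = α * β * ((α - 1) + 2 * Δ) := by ring


lemma clique_chrom {n : ℕ} {G : SimpleGraph (Fin n)} {X : Set (Fin n)} {S : Finset (Fin n)}
    (hS : ↑S ⊆ X) (hcl : G.IsClique ↑S) {k : ℕ} (hk : k ≤ S.card) :
    (k : ℕ∞) ≤ (G.induce X).chromaticNumber := by
  classical
  set S' : Finset ↥X := S.subtype (· ∈ X) with hS'
  have hcard : S'.card = S.card := by
    rw [hS', Finset.card_subtype, Finset.filter_true_of_mem (fun x hx => hS hx)]
  have hclique : (G.induce X).IsClique ↑S' := by
    intro a ha b hb hne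
    rw [Finset.mem_coe, hS', Finset.mem_subtype] at ha hb
    have hadj : G.Adj a.val b.val :=
      hcl ha hb (fun he => hne (Subtype.ext he))
    exact hadj
  calc (k : ℕ∞) ≤ (S'.card : ℕ∞) := by
        rw [Nat.cast_le, hcard]; exact hk
    _ ≤ _ := hclique.card_le_chromaticNumber

end Stmt15Aux



open Stmt15Aux



/-- The main construction.  Fix `ε ∈ (0,1]`, `Δ ≥ 27` with `1 - 8 ln Δ / Δ ≥ 1/(1+ε/2)`,
and `k` with `(ε/2)k ≥ 2Δ` and `(1+ε/2)k ≥ Δ/ln Δ`.  Set `α = ⌈(1+ε/2)k⌉.  If there is an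
`α × α` bipartite graph `H` (given by its A-side neighbourhoods `H : Fin α → Finset (Fin α)`)
with all A-side degrees at most `Δ` and no bi-hole of size at least `8·(ln Δ)/Δ·α`, then for
every `β ≥ 2` there exists a graph `G` on `αβ` vertices with average degree less than
`(1+ε)k` in which every separator `X` satisfies `χ(G[X]) ≥ k`. -/
theorem stmt_15 (ε : ℝ) (hε0 : 0 < ε) (hε1 : ε ≤ 1)
    (Δ : ℕ) (hΔ : 27 ≤ Δ)
    (hΔε : 1 - 8 * Real.log Δ / Δ ≥ 1 / (1 + ε / 2))
    (k : ℕ) (hk1 : (ε / 2) * k ≥ 2 * Δ) (hk2 : (1 + ε / 2) * k ≥ Δ / Real.log Δ)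
    (α : ℕ) (hα : α = ⌈(1 + ε / 2) * k⌉₊)
    (H : Fin α → Finset (Fin α))
    (hHdeg : ∀ a : Fin α, (H a).card ≤ Δ)
    (hHbihole : ∀ A' B' : Finset (Fin α), (∀ a ∈ A', ∀ b ∈ B', b ∉ H a) →
      (min A'.card B'.card : ℝ) < 8 * Real.log Δ / Δ * α) :
    ∀ β : ℕ, 2 ≤ β →
      ∃ G : SimpleGraph (Fin (α * β)),
        (2 * (G.edgeSet.ncard : ℝ) < (1 + ε) * k * (α * β : ℕ)) ∧
        ∀ X : Set (Fin (α * β)), ¬ (G.induce Xᶜ).Preconnected →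
          (k : ℕ∞) ≤ (G.induce X).chromaticNumber := by
  classical
  intro β hβ
  -- numeric basics
  have hε2 : (0:ℝ) < 1 + ε / 2 := by linarith
  have hk0 : 0 < k := by
    by_contra h
    push_neg at h
    interval_cases k
    have : (2:ℝ) * Δ ≤ 0 := by simpa using hk1
    have : (27:ℝ) ≤ Δ := by exact_mod_cast hΔ
    linarith
  have hkα : ((1 + ε / 2) * k : ℝ) ≤ α := by
    rw [hα]; exact Nat.le_ceil _
  have hkk : (k : ℝ) ≤ (1 + ε / 2) * k := by
    nlinarith [Nat.cast_nonneg (α := ℝ) k]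
  have hkleα : k ≤ α := by
    have : (k:ℝ) ≤ (α:ℝ) := le_trans hkk hkα
    exact_mod_cast this
  have hα0 : 0 < α := lt_of_lt_of_le hk0 hkleα
  refine ⟨CG H, ?_, ?_⟩
  · -- edge count
    have hsum := cg_sum_degree_le (β := β) H Δ hHdeg
    rw [SimpleGraph.sum_degrees_eq_twice_card_edges] at hsum
    have hedge : (CG (β := β) H).edgeSet.ncard = ((CG (β := β) H).edgeFinset).card := by
      rw [← SimpleGraph.coe_edgeFinset, Set.ncard_coe_finset]
    rw [hedge]
    have hcast : (2:ℝ) * (((CG (β := β) H).edgeFinset).card) ≤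
        (α * β : ℕ) * (((α:ℝ) - 1) + 2 * Δ) := by
      have := hsum
      have h2 : ((2 * ((CG (β := β) H).edgeFinset).card : ℕ) : ℝ)
          ≤ ((α * β * ((α - 1) + 2 * Δ) : ℕ) : ℝ) := by exact_mod_cast this
      push_cast [Nat.cast_sub hα0] at h2
      convert h2 using 2 <;> push_cast <;> ring
    have hlt : ((α:ℝ) - 1) + 2 * Δ < (1 + ε) * k := by
      have hceil : (α : ℝ) < (1 + ε / 2) * k + 1 := by
        rw [hα]
        exact Nat.ceil_lt_add_one (by positivity)
      linarith
    have hn0 : (0:ℝ) < ((α * β : ℕ) : ℝ) := by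
      have : 0 < α * β := Nat.mul_pos hα0 (by omega)
      exact_mod_cast this
    calc (2:ℝ) * (((CG (β := β) H).edgeFinset).card)
        ≤ (α * β : ℕ) * (((α:ℝ) - 1) + 2 * Δ) := hcast
      _ < (α * β : ℕ) * ((1 + ε) * k) := by
          exact mul_lt_mul_of_pos_left hlt hn0
      _ = (1 + ε) * k * (α * β : ℕ) := by ring
  · -- separators
    intro X hX
    suffices h : ∃ S : Finset (Fin (α * β)), ↑S ⊆ X ∧ (CG H).IsClique (↑S : Set (Fin (α * β))) ∧ k ≤ S.card by
      obtain ⟨S, h1, h2, h3⟩ := h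
      exact clique_chrom h1 h2 h3
    by_cases hfull : ∃ j : Fin β, ∀ a : Fin α, enc a j ∈ X
    · obtain ⟨j, hj⟩ := hfull
      refine ⟨Finset.univ.image (fun a => enc a j), ?_, ?_, ?_⟩
      · intro v hv
        rw [Finset.mem_coe, Finset.mem_image] at hv
        obtain ⟨a, _, rfl⟩ := hv
        exact hj a
      · intro v hv w hw hne
        rw [Finset.mem_coe, Finset.mem_image] at hv hw
        obtain ⟨a, _, rfl⟩ := hv
        obtain ⟨b, _, rfl⟩ := hw
        exact ⟨hne, Or.inl (by simp)⟩
      · rw [Finset.card_image_of_injective _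
          (fun a b h => by simpa using congrArg posv h)]
        simpa using hkleα
    · push_neg at hfull
      set L : Fin β → Finset (Fin α) :=
        fun j => Finset.univ.filter (fun a => enc a j ∉ X) with hL
      have hLne : ∀ j, (L j).Nonempty := by
        intro j
        obtain ⟨a, ha⟩ := hfull j
        exact ⟨a, by simp [hL, ha]⟩
      have key : ∀ j : Fin β, ((L j).card : ℝ) < 8 * Real.log Δ / Δ * α →
          ∃ S : Finset (Fin (α * β)), ↑S ⊆ X ∧ (CG H).IsClique (↑S : Set (Fin (α * β))) ∧ k ≤ S.card := by
        intro j hcard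
        set T : Finset (Fin α) := Finset.univ.filter (fun a => enc a j ∈ X) with hT
        have hTL : T.card + (L j).card = α := by
          rw [hT, hL]
          rw [Finset.card_filter_add_card_filter_not]
          simp
        have hkT : k < T.card := by
          have hTr : (T.card : ℝ) = (α : ℝ) - (L j).card := by
            have : ((T.card + (L j).card : ℕ) : ℝ) = (α:ℝ) := by exact_mod_cast hTL
            push_cast at this
            linarith
          have h1 : (1:ℝ) ≤ (1 - 8 * Real.log Δ / Δ) * (1 + ε / 2) := by
            rw [ge_iff_le, div_le_iff₀ hε2] at hΔε
            linarith
          have h2 : (k : ℝ) < T.card := by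
            have hδ0 : (0:ℝ) ≤ 1 - 8 * Real.log Δ / Δ := by
              have : (0:ℝ) < 1 / (1 + ε / 2) := by positivity
              linarith
            nlinarith [Nat.cast_nonneg (α := ℝ) k]
          exact_mod_cast h2
        refine ⟨T.image (fun a => enc a j), ?_, ?_, ?_⟩
        · intro v hv
          rw [Finset.mem_coe, Finset.mem_image] at hv
          obtain ⟨a, ha, rfl⟩ := hv
          rw [hT, Finset.mem_filter] at ha
          exact ha.2
        · intro v hv w hw hne
          rw [Finset.mem_coe, Finset.mem_image] at hv hw
          obtain ⟨a, _, rfl⟩ := hv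
          obtain ⟨b, _, rfl⟩ := hw
          exact ⟨hne, Or.inl (by simp)⟩
        · rw [Finset.card_image_of_injective _
            (fun a b h => by simpa using congrArg posv h)]
          omega
      by_cases hpair : ∃ j1 j2 : Fin β, j2.val = j1.val + 1 ∧
          ∀ a ∈ L j1, ∀ b ∈ L j2, b ∉ H a
      · obtain ⟨j1, j2, _, hnoedge⟩ := hpair
        have hmin := hHbihole (L j1) (L j2) hnoedge
        rcases le_total (L j1).card (L j2).card with hle | hle
        · rw [min_eq_left (by exact_mod_cast hle : ((L j1).card:ℝ) ≤ ((L j2).card:ℝ))] at hmin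
          exact key j1 hmin
        · rw [min_eq_right (by exact_mod_cast hle : ((L j2).card:ℝ) ≤ ((L j1).card:ℝ))] at hmin
          exact key j2 hmin
      · push_neg at hpair
        exfalso
        apply hX
        have hsame : ∀ u w : ↥Xᶜ, blkv u.val = blkv w.val →
            ((CG H).induce Xᶜ).Reachable u w := by
          intro u w hblk
          by_cases h : u = w
          · subst h; exact SimpleGraph.Reachable.refl _
          · refine SimpleGraph.Adj.reachable ?_
            exact ⟨fun he => h (Subtype.ext he), Or.inl hblk⟩
        have hstep : ∀ (u : ↥Xᶜ) (j2 : Fin β), j2.val = (blkv u.val).val + 1 →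
            ∃ w : ↥Xᶜ, blkv w.val = j2 ∧ ((CG H).induce Xᶜ).Reachable u w := by
          intro u j2 hj
          obtain ⟨a, ha, b, hb, hab⟩ := hpair (blkv u.val) j2 hj
          rw [hL, Finset.mem_filter] at ha hb
          refine ⟨⟨enc b j2, hb.2⟩, by simp, ?_⟩
          have r1 : ((CG H).induce Xᶜ).Reachable u ⟨enc a (blkv u.val), ha.2⟩ :=
            hsame _ _ (by simp)
          have r2 : ((CG H).induce Xᶜ).Adj ⟨enc a (blkv u.val), ha.2⟩ ⟨enc b j2, hb.2⟩ := by
            refine ⟨?_, Or.inr (Or.inl ⟨by simp [hj], by simpa using hab⟩)⟩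
            intro he
            have := congrArg blkv he
            simp only [Function.Embedding.coe_subtype, blkv_enc] at this
            rw [this] at hj
            omega
          exact r1.trans r2.reachable
        have hup : ∀ d : ℕ, ∀ u : ↥Xᶜ, (blkv u.val).val + d < β →
            ∃ w : ↥Xᶜ, (blkv w.val).val = (blkv u.val).val + d ∧
              ((CG H).induce Xᶜ).Reachable u w := by
          intro d
          induction d with
          | zero => exact fun u _ => ⟨u, by omega, SimpleGraph.Reachable.refl _⟩
          | succ d ih =>
            intro u hlt
            obtain ⟨w, hw, rw1⟩ := ih u (by omega)
            obtain ⟨w2, hw2, rw2⟩ := hstep w ⟨(blkv w.val).val + 1, by omega⟩ rfl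
            refine ⟨w2, ?_, rw1.trans rw2⟩
            rw [hw2]
            simp
            omega
        have keyr : ∀ u v : ↥Xᶜ, (blkv u.val).val ≤ (blkv v.val).val →
            ((CG H).induce Xᶜ).Reachable u v := by
          intro u v huv
          obtain ⟨w, hw, rw1⟩ := hup ((blkv v.val).val - (blkv u.val).val) u
            (by have := (blkv v.val).isLt; omega)
          exact rw1.trans (hsame w v (Fin.ext (by omega)))
        intro u v
        rcases le_total (blkv u.val).val (blkv v.val).val with h | h
        · exact keyr u v h
        · exact (keyr v u h).symm
end

section
/- For every real ε > 0 there exists k_0 such that for every integer k ≥ k_0 and every N, there exists a graph G with |V(G)| ≥ N, average degree at most (1+ε)k, such that every X ⊆ V(G) with G - X disconnected contains a clique on k vertices. -/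
open Finset



lemma choose_prod_eq (M e b : ℕ) (hb : b ≤ M) :
    M.choose e * ∏ i ∈ range b, (M - e - i) = (M - b).choose e * ∏ i ∈ range b, (M - i) := by
  induction b with
  | zero => simp
  | succ b ih =>
    have hb' : b ≤ M := Nat.le_of_succ_le hb
    have key : (M - b).choose e * (M - e - b) = (M - (b+1)).choose e * (M - b) := by
      have key := Nat.choose_mul_succ_eq (M - (b+1)) e
      have h1 : M - (b+1) + 1 = M - b := by omega
      rw [h1] at key
      have h2 : M - e - b = M - b - e := by omega
      rw [h2, key, mul_comm]
    rw [prod_range_succ, prod_range_succ, ← mul_assoc, ih hb']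
    calc (M - b).choose e * (∏ i ∈ range b, (M - i)) * (M - e - b)
        = ((M - b).choose e * (M - e - b)) * ∏ i ∈ range b, (M - i) := by ring
      _ = ((M - (b+1)).choose e * (M - b)) * ∏ i ∈ range b, (M - i) := by rw [key]
      _ = (M - (b+1)).choose e * ((∏ i ∈ range b, (M - i)) * (M - b)) := by ring

lemma two_pow_le (b : ℕ) (hb : 1 ≤ b) : 2 * b ^ b ≤ (b + 1) ^ b := by
  have hb0 : (0:ℝ) < b := by exact_mod_cast hb
  have hnn : (0:ℝ) ≤ 1/(b:ℝ) := by positivity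
  have h : ((1:ℝ) + b * (1/b)) ≤ (1 + 1/b) ^ b := one_add_mul_le_pow (by linarith) b
  have h2 : (2:ℝ) ≤ (1 + 1/b) ^ b := by
    rw [mul_one_div, div_self (ne_of_gt hb0)] at h; linarith
  have h3 := mul_le_mul_of_nonneg_right h2 (le_of_lt (pow_pos hb0 b))
  have hexp : ((1:ℝ) + 1/b) ^ b * b ^ b = ((b:ℝ)+1) ^ b := by
    rw [← mul_pow]; congr 1; field_simp
  rw [hexp] at h3
  exact_mod_cast h3

lemma choose_double_step (M e b : ℕ) (hb : 1 ≤ b) (heb : M ≤ e * b) (hM : e + b ≤ M) :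
    2 * (M - b).choose e ≤ M.choose e := by
  have hbM : b ≤ M := by omega
  have hper : ∀ i ∈ range b, (b + 1) * (M - e - i) ≤ b * (M - i) := by
    intro i hi
    simp only [mem_range] at hi
    have h1 : M - e - i + e = M - i := by omega
    calc (b+1) * (M - e - i) = b * (M - e - i) + (M - e - i) := by ring
      _ ≤ b * (M - e - i) + e * b := by
          have : M - e - i ≤ e * b := by omega
          omega
      _ = b * (M - e - i + e) := by ring
      _ = b * (M - i) := by rw [h1]
  have hprod : (b+1)^b * ∏ i ∈ range b, (M - e - i) ≤ b^b * ∏ i ∈ range b, (M - i) := by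
    calc (b+1)^b * ∏ i ∈ range b, (M - e - i) = ∏ i ∈ range b, ((b+1) * (M - e - i)) := by
          rw [prod_mul_distrib, prod_const, card_range]
      _ ≤ ∏ i ∈ range b, (b * (M - i)) := prod_le_prod' hper
      _ = b^b * ∏ i ∈ range b, (M - i) := by rw [prod_mul_distrib, prod_const, card_range]
  have h2 : b^b * (2 * ∏ i ∈ range b, (M - e - i)) ≤ b^b * ∏ i ∈ range b, (M - i) := by
    calc b^b * (2 * ∏ i ∈ range b, (M - e - i))
        = (2 * b^b) * ∏ i ∈ range b, (M - e - i) := by ring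
      _ ≤ (b+1)^b * ∏ i ∈ range b, (M - e - i) :=
          Nat.mul_le_mul_right _ (two_pow_le b hb)
      _ ≤ _ := hprod
  have h3 : 2 * ∏ i ∈ range b, (M - e - i) ≤ ∏ i ∈ range b, (M - i) :=
    Nat.le_of_mul_le_mul_left h2 (Nat.pow_pos (by omega))
  have hPpos : 0 < ∏ i ∈ range b, (M - e - i) := by
    apply prod_pos; intro i hi; simp only [mem_range] at hi; omega
  have h4 : (2 * (M - b).choose e) * ∏ i ∈ range b, (M - e - i)
      ≤ M.choose e * ∏ i ∈ range b, (M - e - i) := by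
    calc (2 * (M - b).choose e) * ∏ i ∈ range b, (M - e - i)
        ≤ (M - b).choose e * ∏ i ∈ range b, (M - i) := by
          calc (2 * (M - b).choose e) * ∏ i ∈ range b, (M - e - i)
              = (M - b).choose e * (2 * ∏ i ∈ range b, (M - e - i)) := by ring
            _ ≤ (M - b).choose e * ∏ i ∈ range b, (M - i) := Nat.mul_le_mul_left _ h3
      _ = M.choose e * ∏ i ∈ range b, (M - e - i) := (choose_prod_eq M e b hbM).symm
  exact Nat.le_of_mul_le_mul_right h4 hPpos

lemma choose_chain (m e b s : ℕ) (hb : 1 ≤ b) (heb : m*m ≤ e * b) (hM : e + (s+1) * b ≤ m*m) :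
    2 ^ s * (m*m - s * b).choose e ≤ (m*m).choose e := by
  induction s with
  | zero => simpa using Nat.le_refl _
  | succ s ih =>
    have hM' : e + (s+1) * b ≤ m*m := by nlinarith
    have hx : m*m - s*b ≤ m*m := Nat.sub_le _ _
    have hy : (s+1+1)*b = s*b + (b + b) := by ring
    have step : 2 * (m*m - s*b - b).choose e ≤ (m*m - s*b).choose e := by
      apply choose_double_step _ _ _ hb
      · omega
      · omega
    have h1 : m*m - (s+1)*b = m*m - s*b - b := by ring_nf; omega
    calc 2 ^ (s+1) * (m*m - (s+1) * b).choose e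
        = 2^s * (2 * (m*m - s*b - b).choose e) := by rw [h1]; ring
      _ ≤ 2^s * (m*m - s*b).choose e := Nat.mul_le_mul_left _ step
      _ ≤ (m*m).choose e := ih hM'



lemma exists_hitting (m a e : ℕ) (hcount : Nat.choose m a * Nat.choose m a *
      Nat.choose (m*m - a*a) e < Nat.choose (m*m) e) :
    ∃ S : Finset (Fin m × Fin m), S.card = e ∧
      ∀ A B : Finset (Fin m), A.card = a → B.card = a → ∃ p ∈ S, p.1 ∈ A ∧ p.2 ∈ B := by
  classical
  set U := (univ : Finset (Fin m × Fin m)).powersetCard e with hU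
  have hcardU : U.card = Nat.choose (m*m) e := by
    rw [hU, card_powersetCard, card_univ, Fintype.card_prod, Fintype.card_fin]
  set Bad := U.filter (fun S => ∃ A : Finset (Fin m), A.card = a ∧ ∃ B : Finset (Fin m),
      B.card = a ∧ ∀ p ∈ S, ¬(p.1 ∈ A ∧ p.2 ∈ B)) with hBad
  have hsub : Bad ⊆ ((univ.powersetCard a) ×ˢ (univ.powersetCard a)).biUnion
      (fun AB => ((AB.1 ×ˢ AB.2)ᶜ : Finset (Fin m × Fin m)).powersetCard e) := by
    intro S hS
    simp only [hBad, mem_filter] at hS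
    obtain ⟨hSU, A, hA, B, hB, hmiss⟩ := hS
    simp only [mem_biUnion, mem_product, mem_powersetCard]
    refine ⟨(A, B), ⟨⟨subset_univ _, hA⟩, ⟨subset_univ _, hB⟩⟩, ?_, ?_⟩
    · intro p hp
      simp only [mem_compl, mem_product]
      exact fun h => hmiss p hp h
    · exact (mem_powersetCard.mp hSU).2
  have hbadcard : Bad.card < U.card := by
    calc Bad.card ≤ _ := card_le_card hsub
      _ ≤ ∑ AB ∈ (univ.powersetCard a) ×ˢ (univ.powersetCard a),
            (((AB.1 ×ˢ AB.2)ᶜ : Finset (Fin m × Fin m)).powersetCard e).card :=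
          card_biUnion_le
      _ ≤ ∑ AB ∈ (univ.powersetCard a) ×ˢ (univ.powersetCard a),
            Nat.choose (m*m - a*a) e := by
          apply sum_le_sum
          intro AB hAB
          simp only [mem_product, mem_powersetCard] at hAB
          rw [card_powersetCard, card_compl, card_product, hAB.1.2, hAB.2.2,
            Fintype.card_prod, Fintype.card_fin]
          -- maybe goal closed already
      _ = Nat.choose m a * Nat.choose m a * Nat.choose (m*m - a*a) e := by
          rw [sum_const, card_product, card_powersetCard, card_univ, Fintype.card_fin,
            smul_eq_mul]
      _ < U.card := by rw [hcardU]; exact hcount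
  obtain ⟨S, hSU, hSgood⟩ : ∃ S ∈ U, S ∉ Bad := by
    by_contra h
    push_neg at h
    have : U ⊆ Bad := h
    exact absurd (card_le_card this) (by omega)
  refine ⟨S, (mem_powersetCard.mp hSU).2, ?_⟩
  intro A B hA hB
  by_contra hcon
  push_neg at hcon
  apply hSgood
  simp only [hBad, mem_filter]
  exact ⟨hSU, A, hA, B, hB, fun p hp h => hcon p hp h.1 h.2⟩


lemma choose_le_two_pow' (m a : ℕ) (ha : a ≤ m) : Nat.choose m a ≤ 2 ^ m := by
  calc Nat.choose m a ≤ ∑ i ∈ range (m+1), Nat.choose m i :=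
        single_le_sum (fun i _ => Nat.zero_le _) (mem_range.mpr (by omega))
    _ = 2 ^ m := Nat.sum_range_choose m

-- main count inequality
lemma count_ineq (m a b e : ℕ) (hb : 1 ≤ b) (ha : a ≤ m)
    (heb : m*m ≤ e*b) (hM : e + (2*m+1+1) * b ≤ m*m) (hba : (2*m+1) * b ≤ a*a) :
    Nat.choose m a * Nat.choose m a * Nat.choose (m*m - a*a) e < Nat.choose (m*m) e := by
  have hchain : 2 ^ (2*m+1) * (m*m - (2*m+1) * b).choose e ≤ (m*m).choose e := by
    exact choose_chain m e b (2*m+1) hb heb hM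
  have hmono : (m*m - a*a).choose e ≤ (m*m - (2*m+1)*b).choose e :=
    Nat.choose_le_choose e (by omega)
  have hpow : Nat.choose m a * Nat.choose m a < 2 ^ (2*m+1) := by
    calc Nat.choose m a * Nat.choose m a ≤ 2^m * 2^m :=
          Nat.mul_le_mul (choose_le_two_pow' m a ha) (choose_le_two_pow' m a ha)
      _ = 2^(2*m) := by rw [← pow_add]; ring_nf
      _ < 2^(2*m+1) := by norm_num [pow_succ]
  have hpos : 0 < (m*m - (2*m+1)*b).choose e := by
    apply Nat.choose_pos
    have hexp : (2*m+1+1)*b = (2*m+1)*b + b := by ring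
    omega
  calc Nat.choose m a * Nat.choose m a * Nat.choose (m*m - a*a) e
      ≤ Nat.choose m a * Nat.choose m a * (m*m - (2*m+1)*b).choose e :=
        Nat.mul_le_mul_left _ hmono
    _ < 2 ^ (2*m+1) * (m*m - (2*m+1)*b).choose e := by
        exact Nat.mul_lt_mul_of_lt_of_le hpow (le_refl _) hpos
    _ ≤ (m*m).choose e := hchain


section Graph
variable (t m : ℕ) (S : Finset (Fin m × Fin m))

def rel (u v : Fin (t*m)) : Prop :=
  (u:ℕ)/m = (v:ℕ)/m ∨ ((v:ℕ)/m = (u:ℕ)/m + 1 ∧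
    ∃ (hu : (u:ℕ) % m < m) (hv : (v:ℕ) % m < m), (⟨(u:ℕ) % m, hu⟩, ⟨(v:ℕ) % m, hv⟩) ∈ S)

def BG : SimpleGraph (Fin (t*m)) := SimpleGraph.fromRel (rel t m S)

variable {t m}

lemma vert_lt {i p : ℕ} (hi : i < t) (hp : p < m) : i * m + p < t * m := by
  calc i * m + p < i * m + m := by omega
    _ = (i+1) * m := by ring
    _ ≤ t * m := Nat.mul_le_mul_right m hi

def vert {i p : ℕ} (hi : i < t) (hp : p < m) : Fin (t*m) := ⟨i * m + p, vert_lt hi hp⟩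

lemma vert_div {i p : ℕ} (hi : i < t) (hp : p < m) : ((vert hi hp : Fin (t*m)) : ℕ) / m = i := by
  have hm : 0 < m := by omega
  simp only [vert]
  rw [add_comm, Nat.add_mul_div_right _ _ hm, Nat.div_eq_of_lt hp, zero_add]

lemma vert_mod {i p : ℕ} (hi : i < t) (hp : p < m) : ((vert hi hp : Fin (t*m)) : ℕ) % m = p := by
  simp only [vert]
  rw [add_comm, Nat.add_mul_mod_self_right, Nat.mod_eq_of_lt hp]

lemma block_lt (v : Fin (t*m)) (hm : 0 < m) : (v:ℕ)/m < t :=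
  Nat.div_lt_of_lt_mul (lt_of_lt_of_le v.isLt (le_of_eq (mul_comm t m)))

-- same block adjacency
lemma adj_same_block {u v : Fin (t*m)} (hne : u ≠ v) (hblk : (u:ℕ)/m = (v:ℕ)/m) :
    (BG t m S).Adj u v := by
  exact ⟨hne, Or.inl (Or.inl hblk)⟩

lemma adj_cross {i : ℕ} (hi : i < t) (hi1 : i + 1 < t) {p q : Fin m}
    (hpq : (p, q) ∈ S) : (BG t m S).Adj (vert hi p.isLt) (vert hi1 q.isLt) := by
  constructor
  · intro h
    have := congrArg (fun x : Fin (t*m) => (x:ℕ)/m) h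
    simp only [vert_div] at this
    omega
  · left
    right
    refine ⟨by rw [vert_div hi1 q.isLt, vert_div hi p.isLt], ?_⟩
    refine ⟨by rw [vert_mod]; exact p.isLt, by rw [vert_mod]; exact q.isLt, ?_⟩
    convert hpq <;> simp [vert_mod]

end Graph

section Conn
variable {t m : ℕ} {S : Finset (Fin m × Fin m)}

lemma induce_adj' {X : Set (Fin (t*m))} {u v : ↥Xᶜ}
    (h : (BG t m S).Adj u.val v.val) : ((BG t m S).induce Xᶜ).Adj u v := by
  exact h

open Classical in
lemma preconn (hm : 0 < m) (a : ℕ) (ha : 1 ≤ a)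
    (hS : ∀ A B : Finset (Fin m), a ≤ A.card → a ≤ B.card → ∃ p ∈ S, p.1 ∈ A ∧ p.2 ∈ B)
    (X : Set (Fin (t*m)))
    (hbig : ∀ (i : ℕ) (hi : i < t),
      a ≤ (univ.filter (fun p : Fin m => (vert hi p.isLt : Fin (t*m)) ∉ X)).card) :
    ((BG t m S).induce Xᶜ).Preconnected := by
  set H := (BG t m S).induce Xᶜ with hH
  -- same block reachability
  have same : ∀ u v : ↥Xᶜ, ((u:Fin (t*m)):ℕ)/m = ((v:Fin (t*m)):ℕ)/m → H.Reachable u v := by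
    intro u v hblk
    by_cases huv : u = v
    · exact huv ▸ SimpleGraph.Reachable.refl u
    · exact (induce_adj' (adj_same_block S (fun h => huv (Subtype.ext h)) hblk)).reachable
  -- chain
  have chain : ∀ d i (hid : i + d < t) (u v : ↥Xᶜ),
      ((u:Fin (t*m)):ℕ)/m = i → ((v:Fin (t*m)):ℕ)/m = i + d → H.Reachable u v := by
    intro d
    induction d with
    | zero => intro i _ u v hu hv; exact same u v (by omega)
    | succ d ih =>
      intro i hid u v hu hv
      have hi1 : i + d < t := by omega
      have hi2 : i + d + 1 < t := by omega
      obtain ⟨pq, hpqS, hpA, hqB⟩ := hS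
        (univ.filter (fun p : Fin m => (vert hi1 p.isLt : Fin (t*m)) ∉ X))
        (univ.filter (fun p : Fin m => (vert hi2 p.isLt : Fin (t*m)) ∉ X))
        (hbig _ hi1) (hbig _ hi2)
      simp only [mem_filter, mem_univ, true_and] at hpA hqB
      have hadj := adj_cross S hi1 hi2 (show (pq.1, pq.2) ∈ S from hpqS)
      set w1 : ↥Xᶜ := ⟨vert hi1 pq.1.isLt, hpA⟩
      set w2 : ↥Xᶜ := ⟨vert hi2 pq.2.isLt, hqB⟩
      have r1 : H.Reachable u w1 := ih i hi1 u w1 hu (vert_div hi1 pq.1.isLt)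
      have r2 : H.Reachable w1 w2 := (induce_adj' hadj).reachable
      have r3 : H.Reachable w2 v := same w2 v (by rw [vert_div hi2 pq.2.isLt, hv]; ring)
      exact (r1.trans r2).trans r3
  intro u v
  have hu := block_lt (u : Fin (t*m)) hm
  have hv := block_lt (v : Fin (t*m)) hm
  rcases le_total (((u:Fin (t*m)):ℕ)/m) (((v:Fin (t*m)):ℕ)/m) with h | h
  · exact chain _ _ (by omega : ((u:Fin (t*m)):ℕ)/m + (((v:Fin (t*m)):ℕ)/m - ((u:Fin (t*m)):ℕ)/m) < t) u v rfl (by omega)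
  · exact (chain _ _ (by omega : ((v:Fin (t*m)):ℕ)/m + (((u:Fin (t*m)):ℕ)/m - ((v:Fin (t*m)):ℕ)/m) < t) v u rfl (by omega)).symm

end Conn


section Count
variable {t m : ℕ} {S : Finset (Fin m × Fin m)}

lemma sum_mod_fin (hm : 0 < m) (f : ℕ → ℕ) :
    ∑ v : Fin (t*m), f ((v:ℕ) % m) = t * ∑ p ∈ range m, f p := by
  rw [Fin.sum_univ_eq_sum_range (fun i => f (i % m)) (t*m)]
  induction t with
  | zero => simp
  | succ t ih =>
    have : (t+1)*m = t*m + m := by ring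
    rw [this, Finset.sum_range_add, ih]
    have : ∑ i ∈ range m, f ((t*m + i) % m) = ∑ p ∈ range m, f p := by
      apply Finset.sum_congr rfl
      intro i hi
      simp only [mem_range] at hi
      rw [mul_comm, Nat.mul_add_mod, Nat.mod_eq_of_lt hi]
    rw [this]; ring

open Classical in
lemma degree_bound (hm : 0 < m) (v : Fin (t*m)) :
    (BG t m S).degree v ≤ (m - 1) + (S.filter (fun q => (q.1:ℕ) = (v:ℕ)%m)).card
      + (S.filter (fun q => (q.2:ℕ) = (v:ℕ)%m)).card := by
  classical
  have hdeg : (BG t m S).degree v = ((univ : Finset (Fin (t*m))).filter ((BG t m S).Adj v)).card := by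
    rw [← SimpleGraph.neighborFinset_eq_filter]; rfl
  set F1 := (univ : Finset (Fin (t*m))).filter (fun u : Fin (t*m) => u ≠ v ∧ (u:ℕ)/m = (v:ℕ)/m) with hF1
  set F2 := (univ : Finset (Fin (t*m))).filter
    (fun u : Fin (t*m) => (u:ℕ)/m = (v:ℕ)/m + 1 ∧ ∃ (h1 : (v:ℕ)%m < m) (h2 : (u:ℕ)%m < m),
      (⟨(v:ℕ)%m, h1⟩, ⟨(u:ℕ)%m, h2⟩) ∈ S) with hF2
  set F3 := (univ : Finset (Fin (t*m))).filter
    (fun u : Fin (t*m) => (v:ℕ)/m = (u:ℕ)/m + 1 ∧ ∃ (h1 : (u:ℕ)%m < m) (h2 : (v:ℕ)%m < m),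
      (⟨(u:ℕ)%m, h1⟩, ⟨(v:ℕ)%m, h2⟩) ∈ S) with hF3
  have hsub : (univ : Finset (Fin (t*m))).filter ((BG t m S).Adj v) ⊆ F1 ∪ F2 ∪ F3 := by
    intro u hu
    simp only [mem_filter, mem_univ, true_and] at hu
    obtain ⟨hne, hr⟩ := hu
    simp only [hF1, hF2, hF3, mem_union, mem_filter, mem_univ, true_and]
    rcases hr with h | h
    · rcases h with h | h
      · exact Or.inl (Or.inl ⟨fun hh => hne (hh ▸ rfl), h.symm⟩)
      · exact Or.inl (Or.inr h)
    · rcases h with h | h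
      · exact Or.inl (Or.inl ⟨fun hh => hne (hh ▸ rfl), h⟩)
      · exact Or.inr h
  have hc1 : F1.card ≤ m - 1 := by
    have himg : F1 ⊆ ((univ : Finset (Fin (t*m))).filter
        (fun u : Fin (t*m) => (u:ℕ)/m = (v:ℕ)/m)).erase v := by
      intro u hu
      simp only [hF1, mem_filter, mem_univ, true_and] at hu
      exact mem_erase.mpr ⟨hu.1, mem_filter.mpr ⟨mem_univ _, hu.2⟩⟩
    have hcard : ((univ : Finset (Fin (t*m))).filter (fun u : Fin (t*m) => (u:ℕ)/m = (v:ℕ)/m)).card = m := by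
      have hbij : (univ : Finset (Fin (t*m))).filter (fun u : Fin (t*m) => (u:ℕ)/m = (v:ℕ)/m)
          = (univ : Finset (Fin m)).image (fun p => (vert (block_lt v hm) p.isLt : Fin (t*m))) := by
        ext u
        simp only [mem_filter, mem_univ, true_and, mem_image]
        constructor
        · intro h
          refine ⟨⟨(u:ℕ)%m, Nat.mod_lt _ hm⟩, ?_⟩
          apply Fin.ext
          simp only [vert]
          rw [← h]
          exact Nat.div_add_mod' _ _
        · rintro ⟨p, _, rfl⟩
          exact vert_div (block_lt v hm) p.isLt
      rw [hbij, card_image_of_injective _ ?_, card_univ, Fintype.card_fin]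
      intro p q hpq
      have := congrArg (fun x : Fin (t*m) => (x:ℕ)%m) hpq
      simp only [vert_mod] at this
      exact Fin.ext this
    calc F1.card ≤ _ := card_le_card himg
      _ ≤ m - 1 := by rw [card_erase_of_mem, hcard]
                      exact mem_filter.mpr ⟨mem_univ _, rfl⟩
  have hc2 : F2.card ≤ (S.filter (fun q => (q.1:ℕ) = (v:ℕ)%m)).card := by
    apply Finset.card_le_card_of_injOn
      (fun u : Fin (t*m) => ((⟨(v:ℕ)%m, Nat.mod_lt _ hm⟩ : Fin m), (⟨(u:ℕ)%m, Nat.mod_lt _ hm⟩ : Fin m)))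
    · intro u hu
      simp only [hF2, mem_coe, mem_filter, mem_univ, true_and] at hu
      obtain ⟨h1x, h2x, hmem⟩ := hu.2
      exact mem_filter.mpr ⟨hmem, rfl⟩
    · intro u1 h1 u2 h2 heq
      simp only [hF2, coe_filter, Set.mem_setOf_eq, mem_univ, true_and] at h1 h2
      have hmod : (u1:ℕ)%m = (u2:ℕ)%m := congrArg (fun q => ((q.2 : Fin m) : ℕ)) heq
      have hdd : m * ((u1:ℕ)/m) = m * ((u2:ℕ)/m) := by rw [h1.1, h2.1]
      apply Fin.ext
      have e1 := Nat.div_add_mod (u1:ℕ) m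
      have e2 := Nat.div_add_mod (u2:ℕ) m
      omega
  have hc3 : F3.card ≤ (S.filter (fun q => (q.2:ℕ) = (v:ℕ)%m)).card := by
    apply Finset.card_le_card_of_injOn
      (fun u : Fin (t*m) => ((⟨(u:ℕ)%m, Nat.mod_lt _ hm⟩ : Fin m), (⟨(v:ℕ)%m, Nat.mod_lt _ hm⟩ : Fin m)))
    · intro u hu
      simp only [hF3, mem_coe, mem_filter, mem_univ, true_and] at hu
      obtain ⟨h1x, h2x, hmem⟩ := hu.2
      exact mem_filter.mpr ⟨hmem, rfl⟩
    · intro u1 h1 u2 h2 heq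
      simp only [hF3, coe_filter, Set.mem_setOf_eq, mem_univ, true_and] at h1 h2
      have hmod : (u1:ℕ)%m = (u2:ℕ)%m := congrArg (fun q => ((q.1 : Fin m) : ℕ)) heq
      have h11 := h1.1
      have h21 := h2.1
      have hq : (u1:ℕ)/m = (u2:ℕ)/m := by omega
      have hdd : m * ((u1:ℕ)/m) = m * ((u2:ℕ)/m) := by rw [hq]
      apply Fin.ext
      have e1 := Nat.div_add_mod (u1:ℕ) m
      have e2 := Nat.div_add_mod (u2:ℕ) m
      omega
  calc (BG t m S).degree v = _ := hdeg
    _ ≤ (F1 ∪ F2 ∪ F3).card := card_le_card hsub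
    _ ≤ F1.card + F2.card + F3.card :=
        le_trans (card_union_le _ _) (by gcongr; exact card_union_le _ _)
    _ ≤ _ := by omega

end Count


section EB
variable {t m : ℕ} (S : Finset (Fin m × Fin m))

open Classical in
lemma edge_bound (hm : 0 < m) :
    2 * (BG t m S).edgeFinset.card ≤ t*(m*(m-1)) + 2*(t*S.card) := by
  classical
  rw [← SimpleGraph.sum_degrees_eq_twice_card_edges]
  have hrow : ∑ v : Fin (t*m), (S.filter (fun q => ((q.1 : Fin m):ℕ) = (v:ℕ)%m)).card
      = t * S.card := by
    rw [sum_mod_fin hm (fun x => (S.filter (fun q => ((q.1 : Fin m):ℕ) = x)).card)]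
    congr 1
    exact (card_eq_sum_card_fiberwise (fun q hq => mem_range.mpr (q.1.isLt))).symm
  have hcol : ∑ v : Fin (t*m), (S.filter (fun q => ((q.2 : Fin m):ℕ) = (v:ℕ)%m)).card
      = t * S.card := by
    rw [sum_mod_fin hm (fun x => (S.filter (fun q => ((q.2 : Fin m):ℕ) = x)).card)]
    congr 1
    exact (card_eq_sum_card_fiberwise (fun q hq => mem_range.mpr (q.2.isLt))).symm
  calc ∑ v : Fin (t*m), (BG t m S).degree v
      ≤ ∑ v : Fin (t*m), ((m-1) + (S.filter (fun q => ((q.1 : Fin m):ℕ) = (v:ℕ)%m)).card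
          + (S.filter (fun q => ((q.2 : Fin m):ℕ) = (v:ℕ)%m)).card) :=
        sum_le_sum (fun v _ => degree_bound hm v)
    _ = (t*m) * (m-1) + t*S.card + t*S.card := by
        rw [sum_add_distrib, sum_add_distrib, hrow, hcol, sum_const, card_univ,
          Fintype.card_fin, smul_eq_mul]
    _ ≤ t*(m*(m-1)) + 2*(t*S.card) := by rw [mul_assoc]; omega

end EB


lemma key_real (ε δ : ℝ) (c a m e k : ℕ) (hδ0 : 0 < δ) (hδε : δ ≤ ε)
    (hδc : 4 ≤ δ*c) (hca : (c:ℝ)*a ≤ k) (hc2e : (c:ℝ)*(2*e) ≤ k*k)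
    (hk1 : 1 ≤ k) (hmk : k ≤ m) (hma : m ≤ k + a) (hm1 : 1 ≤ m) :
    ((m*(m-1) : ℕ) : ℝ) + 2*e ≤ (1+ε)*k*m := by
  have hnat : (m*(m-1) : ℕ) ≤ m*k + m*a := by
    calc m*(m-1) ≤ m*(k+a) := Nat.mul_le_mul_left m (by omega)
      _ = m*k + m*a := by ring
  have hmm : ((m*(m-1) : ℕ) : ℝ) ≤ (m:ℝ)*k + m*a := by exact_mod_cast hnat
  have hk0' : (0:ℝ) < k := by exact_mod_cast hk1
  have hm0' : (0:ℝ) < m := by exact_mod_cast hm1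
  have ha0' : (0:ℝ) ≤ a := Nat.cast_nonneg a
  have he0' : (0:ℝ) ≤ e := Nat.cast_nonneg e
  have hc0' : (0:ℝ) ≤ c := Nat.cast_nonneg c
  have hkm' : (k:ℝ) ≤ m := by exact_mod_cast hmk
  -- 4*(m*a) ≤ δ*k*m
  have h1 : 4*((m:ℝ)*a) ≤ δ*k*m := by
    have ha4 : 4*(a:ℝ) ≤ δ*k := by
      calc 4*(a:ℝ) ≤ (δ*c)*a := by nlinarith
        _ = δ*((c:ℝ)*a) := by ring
        _ ≤ δ*k := by nlinarith
    nlinarith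
  have h2 : 4*(2*(e:ℝ)) ≤ δ*k*m := by
    calc 4*(2*(e:ℝ)) ≤ (δ*c)*(2*e) := by nlinarith
      _ = δ*((c:ℝ)*(2*e)) := by ring
      _ ≤ δ*((k:ℝ)*k) := by nlinarith
      _ ≤ δ*((k:ℝ)*m) := by
          apply mul_le_mul_of_nonneg_left _ (le_of_lt hδ0)
          nlinarith
      _ = δ*k*m := by ring
  have h3 : δ*k*m ≤ ε*k*m := by
    have : (0:ℝ) ≤ k*m := by positivity
    nlinarith
  have hcomm : (m:ℝ)*k = (k:ℝ)*m := mul_comm _ _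
  have hexp : (1+ε)*(k:ℝ)*m = k*m + ε*(k*m) := by ring
  have h3' : δ*(k:ℝ)*m = δ*((k:ℝ)*m) := by ring
  have h3'' : ε*(k:ℝ)*m = ε*((k:ℝ)*m) := by ring
  linarith


/-- For every `ε > 0` there exists `k₀` such that for every `k ≥ k₀` and every `N`, there is
a graph `G` on at least `N` vertices with average degree at most `(1+ε)k`
(i.e. `2|E(G)| ≤ (1+ε)k|V(G)|`) in which every set `X` whose removal disconnects `G`
contains a clique on `k` vertices. -/
theorem stmt_19 (ε : ℝ) (hε : 0 < ε) :
    ∃ k₀ : ℕ, ∀ k : ℕ, k₀ ≤ k → ∀ N : ℕ,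
      ∃ (n : ℕ) (G : SimpleGraph (Fin n)),
        N ≤ n ∧ 0 < n ∧
        (2 * (G.edgeSet.ncard : ℝ) ≤ (1 + ε) * k * n) ∧
        ∀ X : Set (Fin n), ¬ (G.induce Xᶜ).Preconnected →
          ∃ S : Finset (Fin n), ↑S ⊆ X ∧ S.card = k ∧
            ∀ u ∈ S, ∀ v ∈ S, u ≠ v → G.Adj u v := by
  classical
  set δ : ℝ := min ε 1 with hδdef
  have hδ0 : 0 < δ := lt_min hε one_pos
  have hδ1 : δ ≤ 1 := min_le_right _ _
  have hδε : δ ≤ ε := min_le_left _ _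
  set c : ℕ := ⌈(4:ℝ)/δ⌉₊ with hcdef
  have hc_ge : (4:ℝ)/δ ≤ c := Nat.le_ceil _
  have hδc : 4 ≤ δ * c := by
    rw [div_le_iff₀ hδ0] at hc_ge; linarith [mul_comm (c:ℝ) δ]
  have hc4 : 4 ≤ c := by
    have h4 : (4:ℝ) ≤ 4/δ := by
      rw [le_div_iff₀ hδ0]; nlinarith
    have : (4:ℝ) ≤ c := le_trans h4 hc_ge
    exact_mod_cast this
  refine ⟨1000000 * c^3, ?_⟩
  intro k hk N
  -- basic nat quantities
  set a : ℕ := k / c with hadef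
  set m : ℕ := k + a with hmdef
  have hc1 : 1 ≤ c := by omega
  have hc3 : c ≤ c^3 := Nat.le_self_pow (by omega) c
  have hk1 : 1 ≤ k := by omega
  have hkc : 2 * c ≤ k := by omega
  have hca : c * a ≤ k := by
    rw [hadef, mul_comm]; exact Nat.div_mul_le_self k c
  have hdm : c * a + k % c = k := by rw [hadef]; exact Nat.div_add_mod k c
  have hmod := Nat.mod_lt k (show 0 < c by omega)
  have hkca : k ≤ c * a + c := by omega
  have h2ca : k ≤ 2 * (c * a) := by omega
  have ha1 : 1 ≤ a := by
    rcases Nat.eq_zero_or_pos a with h | h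
    · exfalso; rw [h] at hkca; omega
    · exact h
  have ham : a ≤ k := by
    rw [hadef]; exact Nat.div_le_self k c
  have hm0 : 0 < m := by omega
  -- (A) a*a ≥ 250000*c*k
  have hA : 250000 * (c * k) ≤ a * a := by
    have h1 : k * k ≤ (2*(c*a)) * (2*(c*a)) := Nat.mul_le_mul h2ca h2ca
    have h2 : (1000000 * c^3) * k ≤ k * k := Nat.mul_le_mul_right k hk
    have h3 : (4*(c*c)) * (250000 * (c*k)) ≤ (4*(c*c)) * (a*a) := by
      calc (4*(c*c)) * (250000 * (c*k)) = (1000000 * c^3) * k := by ring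
        _ ≤ k * k := h2
        _ ≤ (2*(c*a)) * (2*(c*a)) := h1
        _ = (4*(c*c)) * (a*a) := by ring
    exact Nat.le_of_mul_le_mul_left h3 (by positivity)
  have hB : 2*m + 1 ≤ 5*k := by omega
  have hck : c*k ≤ a*a*1 := by
    have := hA; omega
  have haa10k : 10*k ≤ a*a := by
    have h1 : 250000*(c*k) ≥ 250000*k := by
      have : k ≤ c*k := Nat.le_mul_of_pos_left k (by omega)
      omega
    omega
  have haa5k : 5*k ≤ a*a := by omega
  set b : ℕ := a*a / (2*m+1) with hbdef
  have hb1 : 1 ≤ b := by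
    rw [hbdef]
    rw [Nat.le_div_iff_mul_le (by omega : 0 < 2*m+1)]
    omega
  have hD : b*(2*m+1) ≤ a*a := by
    rw [hbdef, mul_comm]; exact Nat.mul_div_le (a*a) (2*m+1)
  have hdmb : (2*m+1) * b + (a*a) % (2*m+1) = a*a := by
    rw [hbdef]; exact Nat.div_add_mod (a*a) (2*m+1)
  have hmodb := Nat.mod_lt (a*a) (show 0 < 2*m+1 by omega)
  have hE : a*a ≤ b*(2*m+1) + (2*m+1) := by
    have h := hdmb
    have h2 : (2*m+1)*b = b*(2*m+1) := by ring
    omega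
  set e : ℕ := m*m/b + 1 with hedef
  have hdme : b * (m*m/b) + (m*m) % b = m*m := Nat.div_add_mod (m*m) b
  have hmode := Nat.mod_lt (m*m) (show 0 < b by omega)
  have heb : m*m ≤ e*b := by
    have h1 : e*b = b*(m*m/b) + b := by rw [hedef]; ring
    omega
  have hebub : e*b ≤ m*m + b := by
    have h1 : e*b = b*(m*m/b) + b := by rw [hedef]; ring
    omega
  -- (H),(I): 10*b*k ≥ a*a
  have hH : a*a ≤ 2*(b*(2*m+1)) := by
    have h2 : (2*m+1)*b = b*(2*m+1) := by ring
    omega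
  have hI : a*a ≤ 10*(b*k) := by
    have h1 : 2*(b*(2*m+1)) ≤ 2*(b*(5*k)) := by
      apply Nat.mul_le_mul_left
      exact Nat.mul_le_mul_left b hB
    calc a*a ≤ 2*(b*(2*m+1)) := hH
      _ ≤ 2*(b*(5*k)) := h1
      _ = 10*(b*k) := by ring
  have hba : b ≤ a*a := by
    have h1 : b ≤ b*(2*m+1) := Nat.le_mul_of_pos_right b (by omega)
    omega
  have hm2k : m ≤ 2*k := by omega
  -- (J) e*(a*a) ≤ 50*k³
  have hJ : e*(a*a) ≤ 50*(k*k*k) := by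
    calc e*(a*a) ≤ e*(10*(b*k)) := Nat.mul_le_mul_left e hI
      _ = 10*((e*b)*k) := by ring
      _ ≤ 10*((m*m + b)*k) := by
          apply Nat.mul_le_mul_left
          exact Nat.mul_le_mul_right k (by omega)
      _ ≤ 10*((m*m + a*a)*k) := by
          apply Nat.mul_le_mul_left
          exact Nat.mul_le_mul_right k (by omega)
      _ ≤ 10*(((2*k)*(2*k) + k*k)*k) := by
          apply Nat.mul_le_mul_left
          apply Nat.mul_le_mul_right
          have h1 : m*m ≤ (2*k)*(2*k) := Nat.mul_le_mul hm2k hm2k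
          have h2 : a*a ≤ k*k := Nat.mul_le_mul ham ham
          omega
      _ = 50*(k*k*k) := by ring
  -- e ≤ k*k/20000 style: 20000*e ≤ k*k
  have haa1M : 1000000*k ≤ a*a := by
    have : 250000*(c*k) ≥ 250000*(4*k) := by
      have : 4*k ≤ c*k := Nat.mul_le_mul_right k hc4
      omega
    omega
  have hJ2 : e*(1000000*k) ≤ 50*(k*k*k) := le_trans (Nat.mul_le_mul_left e haa1M) hJ
  have he20000 : 20000*e ≤ k*k := by
    have h1 : (20000*e)*(50*k) ≤ (k*k)*(50*k) := by
      calc (20000*e)*(50*k) = e*(1000000*k) := by ring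
        _ ≤ 50*(k*k*k) := hJ2
        _ = (k*k)*(50*k) := by ring
    exact Nat.le_of_mul_le_mul_right h1 (by positivity)
  -- e ≤ 200 c² k and c*(2e) ≤ k*k
  have hk2 : k*k ≤ 4*((c*c)*(a*a)) := by
    calc k*k ≤ (2*(c*a))*(2*(c*a)) := Nat.mul_le_mul h2ca h2ca
      _ = 4*((c*c)*(a*a)) := by ring
  have hec : e*(k*k) ≤ 200*((c*c)*(k*k*k)) := by
    calc e*(k*k) ≤ e*(4*((c*c)*(a*a))) := Nat.mul_le_mul_left e hk2
      _ = 4*(c*c)*(e*(a*a)) := by ring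
      _ ≤ 4*(c*c)*(50*(k*k*k)) := Nat.mul_le_mul_left _ hJ
      _ = 200*((c*c)*(k*k*k)) := by ring
  have hek : e ≤ 200*((c*c)*k) := by
    have h1 : e*(k*k) ≤ (200*((c*c)*k))*(k*k) := by
      calc e*(k*k) ≤ 200*((c*c)*(k*k*k)) := hec
        _ = (200*((c*c)*k))*(k*k) := by ring
    exact Nat.le_of_mul_le_mul_right h1 (by positivity)
  have hc2e : c*(2*e) ≤ k*k := by
    calc c*(2*e) ≤ c*(2*(200*((c*c)*k))) := Nat.mul_le_mul_left c (by omega)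
      _ = 400*(c^3)*k := by ring
      _ ≤ k*k := by
          apply Nat.mul_le_mul_right k
          calc 400*c^3 ≤ 1000000*c^3 := by omega
            _ ≤ k := hk
  -- (K) chain condition: e + (2*m+1+1)*b ≤ m*m
  have h16a : 16*(a*a) ≤ k*k := by
    have h4a : 4*a ≤ k := le_trans (Nat.mul_le_mul_right a hc4) hca
    calc 16*(a*a) = (4*a)*(4*a) := by ring
      _ ≤ k*k := Nat.mul_le_mul h4a h4a
  have hkm : k*k ≤ m*m := Nat.mul_le_mul (by omega) (by omega)
  have hM : e + (2*m+1+1)*b ≤ m*m := by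
    have h1 : (2*m+1+1)*b = (2*m+1)*b + b := by ring
    have h2 : e + (2*m+1+1)*b ≤ e + 2*(a*a) := by omega
    have h3 : 16*(e + 2*(a*a)) ≤ k*k + 2*(k*k) := by omega
    have : e + 2*(a*a) ≤ k*k := by omega
    omega
  -- counting hypothesis
  have hcount : Nat.choose m a * Nat.choose m a * Nat.choose (m*m - a*a) e
      < Nat.choose (m*m) e :=
    count_ineq m a b e hb1 (by omega) heb hM (by rw [mul_comm]; exact hD)
  obtain ⟨S, hScard, hShit⟩ := exists_hitting m a e hcount
  have hShit' : ∀ A B : Finset (Fin m), a ≤ A.card → a ≤ B.card →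
      ∃ p ∈ S, p.1 ∈ A ∧ p.2 ∈ B := by
    intro A B hA hB
    obtain ⟨A', hA'sub, hA'⟩ := exists_subset_card_eq hA
    obtain ⟨B', hB'sub, hB'⟩ := exists_subset_card_eq hB
    obtain ⟨p, hp, hp1, hp2⟩ := hShit A' B' hA' hB'
    exact ⟨p, hp, hA'sub hp1, hB'sub hp2⟩
  set t : ℕ := N + 1 with htdef
  clear_value δ c a m b e t
  refine ⟨t*m, BG t m S, ?_, ?_, ?_, ?_⟩
  · calc N ≤ t := by omega
      _ ≤ t*m := Nat.le_mul_of_pos_right _ hm0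
  · exact Nat.mul_pos (by omega) hm0
  · -- edge bound
    have hedge : 2 * (BG t m S).edgeFinset.card ≤ t*(m*(m-1)) + 2*(t*e) := by
      have := edge_bound S (t := t) hm0
      rw [hScard] at this
      exact this
    have hncard : (BG t m S).edgeSet.ncard = (BG t m S).edgeFinset.card := by
      rw [SimpleGraph.edgeFinset, Set.ncard_eq_toFinset_card']
    rw [hncard]
    -- real arithmetic
    have hcast : (2 * ((BG t m S).edgeFinset.card : ℝ)) ≤ (t*(m*(m-1)) + 2*(t*e) : ℕ) := by
      exact_mod_cast hedge
    apply le_trans hcast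
    have hkey : ((m*(m-1) : ℕ) : ℝ) + 2*e ≤ (1+ε)*k*m :=
      key_real ε δ c a m e k hδ0 hδε hδc (by exact_mod_cast hca)
        (by exact_mod_cast hc2e) hk1 (by omega) (by omega) (by omega)
    calc ((t*(m*(m-1)) + 2*(t*e) : ℕ) : ℝ) = t*(((m*(m-1):ℕ):ℝ) + 2*e) := by
          push_cast; ring
      _ ≤ t*((1+ε)*k*m) := mul_le_mul_of_nonneg_left hkey (by positivity)
      _ = (1+ε)*k*(((t*m : ℕ)):ℝ) := by push_cast; ring
  · -- separator property
    intro X hX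
    by_cases hbig : ∀ (i : ℕ) (hi : i < t),
        a ≤ (univ.filter (fun p : Fin m => (vert hi p.isLt : Fin (t*m)) ∉ X)).card
    · exact absurd (preconn hm0 a ha1 hShit' X hbig) hX
    · push_neg at hbig
      obtain ⟨i, hi, hlt⟩ := hbig
      set A := univ.filter (fun p : Fin m => (vert hi p.isLt : Fin (t*m)) ∉ X) with hAdef
      set F := univ.filter (fun p : Fin m => (vert hi p.isLt : Fin (t*m)) ∈ X) with hFdef
      have hFA : F.card + A.card = m := by
        rw [hFdef, hAdef]
        rw [Finset.card_filter_add_card_filter_not]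
        · simp
      have hFk : k ≤ F.card := by omega
      obtain ⟨T, hTF, hTcard⟩ := exists_subset_card_eq hFk
      refine ⟨T.image (fun p => (vert hi p.isLt : Fin (t*m))), ?_, ?_, ?_⟩
      · intro x hx
        simp only [coe_image, Set.mem_image, mem_coe] at hx
        obtain ⟨p, hp, rfl⟩ := hx
        have := hTF hp
        rw [hFdef, mem_filter] at this
        exact this.2
      · rw [card_image_of_injective _ ?_, hTcard]
        intro p q hpq
        have := congrArg (fun x : Fin (t*m) => (x:ℕ)%m) hpq
        simp only [vert_mod] at this
        exact Fin.ext this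
      · intro u hu v hv huv
        simp only [mem_image] at hu hv
        obtain ⟨p, hp, rfl⟩ := hu
        obtain ⟨q, hq, rfl⟩ := hv
        apply adj_same_block S huv
        rw [vert_div, vert_div]
end
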